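/- arXiv:1304.7719 — 7 statements merged into one kernel-verified Lean document; each statement's English description precedes it below -/
import Mathlib

section
/- Let S be a closed set of pairs and g ∈ SL_n(ℂ). Then ⋀_{i∈S_j}(g e_i) = ⋀_{i∈S_j} e_i holds in Λ^{|S_j|}ℂ^n for every j = 1,…,n if and only if g ∈ U_S. Equivalently, the stabiliser in SL_n(ℂ) of the point p_S = ⨁_{j=1}^n ⋀_{i∈S_j} e_i ∈ ⨁_{j=1}^n Λ^{|S_j|}ℂ^n (under the componentwise exterior-power action) is exactly U_S. -/
open Matrix Filter Topology

noncomputable section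

/-- A finite set `S` of pairs `(i,j)` of indices with `i < j` is *closed* if
`(i,j) ∈ S` and `(j,k) ∈ S` imply `(i,k) ∈ S`. -/
def PairsClosed {n : ℕ} (S : Finset (Fin n × Fin n)) : Prop :=
  (∀ p ∈ S, p.1 < p.2) ∧ ∀ i j k : Fin n, (i, j) ∈ S → (j, k) ∈ S → (i, k) ∈ S

/-- The subgroup `U_S` of `SL_n(ℂ)`, as a set: matrices that are upper triangular,
with ones on the diagonal, and vanishing at each entry `(i,j)` with `i < j` and
`(i,j) ∉ S`. -/
def USet {n : ℕ} (S : Finset (Fin n × Fin n)) :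
    Set (Matrix.SpecialLinearGroup (Fin n) ℂ) :=
  {u | (∀ i j : Fin n, j < i → u.val i j = 0) ∧ (∀ i : Fin n, u.val i i = 1) ∧
       ∀ i j : Fin n, i < j → (i, j) ∉ S → u.val i j = 0}

/-- `S_j = {j} ∪ {i : (i,j) ∈ S}`. -/
def colS {n : ℕ} (S : Finset (Fin n × Fin n)) (j : Fin n) : Finset (Fin n) :=
  insert j ((S.filter (fun p => p.2 = j)).image Prod.fst)

/-- The index set of the standard basis of `Λ^k ℂ^n`: subsets of `{1,…,n}` of size `k`. -/
abbrev SubK (n k : ℕ) := {C : Finset (Fin n) // C.card = k}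

/-- The increasing enumeration of a size-`k` subset of `{1,…,n}`. -/
def enumK {n k : ℕ} (C : SubK n k) (a : Fin k) : Fin n :=
  (C.1.orderIsoOfFin C.2 a : Fin n)

/-- The `k`-th exterior power `Λ^k ℂ^n`, in the coordinates given by its standard basis
`⋀_{i∈C} e_i`, `C ⊆ {1,…,n}`, `|C| = k`. -/
abbrev ExtP (n k : ℕ) := SubK n k → ℂ

/-- The standard basis vector `e_i` of `ℂ^n`. -/
def stdVec {n : ℕ} (i : Fin n) : Fin n → ℂ := Pi.single i 1

/-- The wedge `v_1 ∧ … ∧ v_k ∈ Λ^k ℂ^n` of a family of vectors, in standard coordinates: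
its coordinate along the basis vector `⋀_{i∈C} e_i` is the determinant of the `k×k`
matrix of the `C`-coordinates of `v_1,…,v_k`. -/
def wedgeFam {n : ℕ} (k : ℕ) (v : Fin k → (Fin n → ℂ)) : ExtP n k :=
  fun C => Matrix.det (Matrix.of fun a b : Fin k => v b (enumK C a))

/-- `⋀_{i∈C} e_i`, the wedge of the standard basis vectors indexed by `C`, taken in
increasing order of indices. -/
def wedgeBasis {n : ℕ} (k : ℕ) (C : Finset (Fin n)) (h : C.card = k) : ExtP n k :=
  wedgeFam k (fun a => stdVec (C.orderIsoOfFin h a))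

/-- `⋀_{i∈D} (g e_i)`, the wedge of the columns of `g` indexed by `D`, taken in
increasing order of indices. -/
def colWedge {n : ℕ} (k : ℕ) (g : Matrix (Fin n) (Fin n) ℂ) (D : Finset (Fin n))
    (h : D.card = k) : ExtP n k :=
  wedgeFam k (fun a => g.mulVec (stdVec (D.orderIsoOfFin h a)))

/-- The minor of `g` with rows `C` and columns `D` (both of size `k`, in increasing
order of indices). -/
def gminor {n : ℕ} (k : ℕ) (g : Matrix (Fin n) (Fin n) ℂ) (C D : SubK n k) : ℂ :=
  Matrix.det (Matrix.of fun a b : Fin k => g (enumK C a) (enumK D b))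

/-- The action of `g` on `Λ^k ℂ^n` (the `k`-th exterior power of the standard action of
`g` on `ℂ^n`), in standard coordinates: the matrix of `Λ^k g` in the standard basis is
the `k`-th compound matrix of `g`, whose entries are the `k×k` minors of `g`. -/
def extAct {n : ℕ} (k : ℕ) (g : Matrix (Fin n) (Fin n) ℂ) (x : ExtP n k) : ExtP n k :=
  fun C => ∑ D : SubK n k, gminor k g C D * x D

-- basic facts about enumK
lemma enumK_strictMono {n k : ℕ} (C : SubK n k) : StrictMono (enumK C) := by
  intro a b hab
  exact Subtype.coe_lt_coe.mpr ((C.1.orderIsoOfFin C.2).lt_iff_lt.mpr hab)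

lemma enumK_inj {n k : ℕ} (C : SubK n k) : Function.Injective (enumK C) :=
  (enumK_strictMono C).injective

lemma enumK_mem {n k : ℕ} (C : SubK n k) (a : Fin k) : enumK C a ∈ C.1 :=
  (C.1.orderIsoOfFin C.2 a).2

lemma enumK_surj {n k : ℕ} (C : SubK n k) {x : Fin n} (hx : x ∈ C.1) :
    ∃ a, enumK C a = x := by
  refine ⟨(C.1.orderIsoOfFin C.2).symm ⟨x, hx⟩, ?_⟩
  simp [enumK]

lemma mem_colS {n : ℕ} {S : Finset (Fin n × Fin n)} {i j : Fin n} :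
    i ∈ colS S j ↔ i = j ∨ (i, j) ∈ S := by
  simp only [colS, Finset.mem_insert, Finset.mem_image, Finset.mem_filter]
  constructor
  · rintro (h | ⟨⟨a, b⟩, ⟨hm, hb⟩, ha⟩)
    · exact Or.inl h
    · subst ha; subst hb; exact Or.inr hm
  · rintro (h | h)
    · exact Or.inl h
    · exact Or.inr ⟨(i, j), ⟨h, rfl⟩, rfl⟩

lemma self_mem_colS {n : ℕ} (S : Finset (Fin n × Fin n)) (j : Fin n) : j ∈ colS S j :=
  mem_colS.mpr (Or.inl rfl)

lemma wedgeBasis_apply {n k : ℕ} (D : Finset (Fin n)) (h : D.card = k) (C : SubK n k) :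
    wedgeBasis k D h C = if C.1 = D then 1 else 0 := by
  unfold wedgeBasis wedgeFam stdVec
  split_ifs with hCD
  · obtain ⟨C, hC⟩ := C
    simp only at hCD
    subst hCD
    have key : (Matrix.of fun a b : Fin k => (fun a => (Pi.single (C.orderIsoOfFin h a : Fin n) 1 : Fin n → ℂ)) b (enumK ⟨C, hC⟩ a)) = (1 : Matrix (Fin k) (Fin k) ℂ) := by
      ext a b
      have hcb : ((C.orderIsoOfFin h b : Fin n)) = enumK ⟨C, hC⟩ b := rfl
      simp only [Matrix.of_apply]
      rw [hcb, Pi.single_apply, Matrix.one_apply]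
      by_cases hab : a = b
      · simp [hab]
      · have hne : enumK ⟨C, hC⟩ a ≠ enumK ⟨C, hC⟩ b := fun he => hab (enumK_inj _ he)
        simp [hab, hne]
    rw [key, Matrix.det_one]
  · have hsub : ¬ C.1 ⊆ D := by
      intro hsub
      exact hCD (Finset.eq_of_subset_of_card_le hsub (by rw [C.2, h]))
    obtain ⟨x, hxC, hxD⟩ := Finset.not_subset.mp hsub
    obtain ⟨a, ha⟩ := enumK_surj C hxC
    apply Matrix.det_eq_zero_of_row_eq_zero a
    intro b
    simp only [Matrix.of_apply]
    rw [Pi.single_apply, if_neg]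
    intro he
    apply hxD
    rw [← ha, he]
    exact (D.orderIsoOfFin h b).2

lemma colWedge_apply {n k : ℕ} (g : Matrix (Fin n) (Fin n) ℂ) (D : Finset (Fin n))
    (h : D.card = k) (C : SubK n k) :
    colWedge k g D h C = gminor k g C ⟨D, h⟩ := by
  unfold colWedge wedgeFam gminor stdVec
  congr 1
  ext a b
  simp only [Matrix.of_apply, Matrix.mulVec_single, mul_one]
  simp only [Pi.smul_apply, MulOpposite.op_one, one_smul]
  rfl

/-- If all maximal minors of the columns `D` of `g` vanish except the principal
one (w.r.t. rows `D`) which is `1`, then rows outside `D` vanish on columns `D`. -/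
lemma rows_zero_of_minors {n k : ℕ} (g : Matrix (Fin n) (Fin n) ℂ)
    (D : Finset (Fin n)) (hD : D.card = k)
    (hmin : ∀ C : SubK n k, gminor k g C ⟨D, hD⟩ = if C.1 = D then 1 else 0)
    {r : Fin n} (hr : r ∉ D) {s : Fin n} (hs : s ∈ D) : g r s = 0 := by
  set E : Fin k → Fin n := enumK ⟨D, hD⟩ with hE
  set M : Matrix (Fin k) (Fin k) ℂ := Matrix.of fun a b => g (E a) (E b) with hM
  set v : Fin k → ℂ := fun b => g r (E b) with hv
  have hdet : M.det = 1 := by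
    have := hmin ⟨D, hD⟩
    rw [if_pos rfl] at this
    exact this
  have hzero : ∀ s' : Fin k, (M.updateRow s' v).det = 0 := by
    intro s'
    set C' : Finset (Fin n) := insert r (D.erase (E s')) with hC'def
    have hrE : r ∉ D.erase (E s') := fun h => hr (Finset.mem_of_mem_erase h)
    have hC'card : C'.card = k := by
      rw [hC'def, Finset.card_insert_of_notMem hrE,
        Finset.card_erase_of_mem (enumK_mem ⟨D, hD⟩ s'), hD]
      exact Nat.succ_pred_eq_of_pos s'.pos
    set f : Fin k → Fin n := fun a => if a = s' then r else E a with hf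
    have hfinj : Function.Injective f := by
      intro a b hab
      by_cases ha : a = s' <;> by_cases hb : b = s'
      · rw [ha, hb]
      · exfalso; apply hr; rw [hf] at hab; simp [ha, hb] at hab
        rw [hab]; exact enumK_mem ⟨D, hD⟩ b
      · exfalso; apply hr; rw [hf] at hab; simp [ha, hb] at hab
        rw [← hab]; exact enumK_mem ⟨D, hD⟩ a
      · rw [hf] at hab; simp [ha, hb] at hab; exact enumK_inj _ hab
    have hfm : ∀ a, f a ∈ C' := by
      intro a
      rw [hf, hC'def]
      by_cases ha : a = s'
      · simp [ha]
      · simp only [ha, if_neg, Finset.mem_insert]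
        right
        exact Finset.mem_erase.mpr ⟨fun he => ha (enumK_inj _ he), enumK_mem ⟨D, hD⟩ a⟩
    have hFbij : Function.Bijective (fun a => (⟨f a, hfm a⟩ : {x // x ∈ C'})) := by
      rw [Fintype.bijective_iff_injective_and_card]
      constructor
      · intro a b hab
        exact hfinj (congrArg Subtype.val hab)
      · rw [Fintype.card_coe, hC'card, Fintype.card_fin]
    set F : Fin k ≃ {x // x ∈ C'} := Equiv.ofBijective _ hFbij with hF
    set σ : Equiv.Perm (Fin k) :=
      F.trans (C'.orderIsoOfFin hC'card).toEquiv.symm with hσ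
    have hσf : ∀ a, enumK ⟨C', hC'card⟩ (σ a) = f a := by
      intro a
      show ((C'.orderIsoOfFin hC'card) ((C'.orderIsoOfFin hC'card).toEquiv.symm (F a)) : Fin n) = f a
      rw [show (C'.orderIsoOfFin hC'card).toEquiv.symm (F a)
            = (C'.orderIsoOfFin hC'card).symm (F a) from rfl]
      rw [OrderIso.apply_symm_apply]
      rfl
    have hsub : M.updateRow s' v
        = (Matrix.of fun a b : Fin k => g (enumK ⟨C', hC'card⟩ a) (E b)).submatrix σ id := by
      ext a b
      rw [Matrix.submatrix_apply, Matrix.of_apply, hσf, id]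
      by_cases ha : a = s'
      · rw [ha, Matrix.updateRow_self, hf]; simp; rfl
      · rw [Matrix.updateRow_ne ha, hf]; simp [ha, hM]
    have hC'ne : C' ≠ D := by
      intro h
      apply hr
      rw [← h, hC'def]
      exact Finset.mem_insert_self _ _
    have hminor0 : gminor k g ⟨C', hC'card⟩ ⟨D, hD⟩ = 0 := by
      rw [hmin ⟨C', hC'card⟩, if_neg hC'ne]
    rw [hsub, Matrix.det_permute]
    have : (Matrix.of fun a b : Fin k => g (enumK ⟨C', hC'card⟩ a) (E b)).det = 0 := hminor0
    rw [this, mul_zero]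
  have hcr : Mᵀ.cramer v = 0 := by
    funext s'
    rw [Matrix.cramer_apply, Matrix.updateCol_transpose, Matrix.det_transpose]
    exact hzero s'
  have hmv : Mᵀ.mulVec (Mᵀ.cramer v) = Mᵀ.det • v := Matrix.mulVec_cramer Mᵀ v
  rw [hcr, Matrix.mulVec_zero, Matrix.det_transpose, hdet, one_smul] at hmv
  obtain ⟨b, hb⟩ := enumK_surj ⟨D, hD⟩ hs
  have : v b = 0 := by rw [← hmv]; rfl
  rw [hv] at this
  rw [← hb]
  exact this

lemma prod_diag_of_minor {n k : ℕ} (g : Matrix (Fin n) (Fin n) ℂ)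
    (hut : ∀ i j : Fin n, j < i → g i j = 0) (D : Finset (Fin n)) (hD : D.card = k)
    (h1 : gminor k g ⟨D, hD⟩ ⟨D, hD⟩ = 1) : ∏ s ∈ D, g s s = 1 := by
  set E : Fin k → Fin n := enumK ⟨D, hD⟩ with hE
  have hbt : (Matrix.of fun a b : Fin k => g (E a) (E b)).BlockTriangular id := by
    intro a b hab
    exact hut (E a) (E b) (enumK_strictMono ⟨D, hD⟩ hab)
  have hdet := Matrix.det_of_upperTriangular hbt
  have hone : (∏ a : Fin k, g (E a) (E a)) = 1 := by
    have hgm : gminor k g ⟨D, hD⟩ ⟨D, hD⟩ = ∏ a : Fin k, g (E a) (E a) := hdet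
    rw [← hgm]; exact h1
  have hcomp := Equiv.prod_comp (D.orderIsoOfFin hD).toEquiv
    (fun x : {x // x ∈ D} => g x x)
  rw [← Finset.prod_coe_sort D (fun s => g s s), ← hcomp]
  exact hone

/-- Let `S` be a closed set of pairs and `g ∈ SL_n(ℂ)`. Then
`⋀_{i∈S_j}(g e_i) = ⋀_{i∈S_j} e_i` holds in `Λ^{|S_j|} ℂ^n` for every `j = 1,…,n`
if and only if `g ∈ U_S`: the stabiliser of
`p_S = ⨁_{j=1}^n ⋀_{i∈S_j} e_i ∈ ⨁_{j=1}^n Λ^{|S_j|} ℂ^n` in `SL_n(ℂ)` is exactly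
`U_S`. -/
theorem stmt0 {n : ℕ} (hn : 1 ≤ n) (S : Finset (Fin n × Fin n)) (hS : PairsClosed S)
    (g : Matrix.SpecialLinearGroup (Fin n) ℂ) :
    (∀ j : Fin n,
        colWedge (colS S j).card g.val (colS S j) rfl
          = wedgeBasis (colS S j).card (colS S j) rfl)
      ↔ g ∈ USet S := by
  constructor
  · intro H
    -- translate hypothesis into minors
    have hmin : ∀ j : Fin n, ∀ C : SubK n (colS S j).card,
        gminor _ g.val C ⟨colS S j, rfl⟩ = if C.1 = colS S j then 1 else 0 := by
      intro j C
      rw [← colWedge_apply, H j, wedgeBasis_apply]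
    -- rows outside colS S j vanish on colS S j
    have hrow : ∀ (j : Fin n) (r : Fin n), r ∉ colS S j → ∀ s ∈ colS S j, g.val r s = 0 :=
      fun j r hr s hs => rows_zero_of_minors g.val (colS S j) rfl (hmin j) hr hs
    -- upper triangularity
    have hut : ∀ i j : Fin n, j < i → g.val i j = 0 := by
      intro i j hji
      apply hrow j i _ j (self_mem_colS S j)
      rw [mem_colS]
      rintro (h | h)
      · exact absurd h (ne_of_gt hji)
      · exact absurd (hS.1 _ h) (not_lt.mpr (le_of_lt hji))
    -- pattern
    have hpat : ∀ i j : Fin n, i < j → (i, j) ∉ S → g.val i j = 0 := by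
      intro i j hij hnS
      apply hrow j i _ j (self_mem_colS S j)
      rw [mem_colS]
      rintro (h | h)
      · exact absurd h (ne_of_lt hij)
      · exact hnS h
    -- diagonal entries, by strong induction
    have hprod : ∀ j : Fin n, ∏ s ∈ colS S j, g.val s s = 1 := by
      intro j
      apply prod_diag_of_minor g.val hut (colS S j) rfl
      have := hmin j ⟨colS S j, rfl⟩
      rwa [if_pos rfl] at this
    have hdiag : ∀ i : Fin n, g.val i i = 1 := by
      suffices hm : ∀ m : ℕ, ∀ hm : m < n, g.val ⟨m, hm⟩ ⟨m, hm⟩ = 1 by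
        intro i; have := hm i.val i.isLt; rwa [Fin.eta] at this
      intro m
      induction m using Nat.strong_induction_on with
      | _ m ihm =>
        intro hmn
        set j : Fin n := ⟨m, hmn⟩ with hjdef
        have ih : ∀ s : Fin n, s < j → g.val s s = 1 := by
          intro s hs
          have := ihm s.val hs s.isLt
          rwa [Fin.eta] at this
        have hp := hprod j
        rw [← Finset.prod_erase_mul _ _ (self_mem_colS S j)] at hp
        have herase : ∀ s ∈ (colS S j).erase j, g.val s s = 1 := by
          intro s hserase
          obtain ⟨hne, hsmem⟩ := Finset.mem_erase.mp hserase
          have hsj : (s, j) ∈ S := (mem_colS.mp hsmem).resolve_left hne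
          exact ih s (hS.1 _ hsj)
        rw [Finset.prod_congr rfl herase, Finset.prod_const_one, one_mul] at hp
        exact hp
    exact ⟨hut, hdiag, hpat⟩
  · intro hg j
    obtain ⟨hut, hdiag, hpat⟩ := hg
    funext C
    rw [colWedge_apply, wedgeBasis_apply]
    -- key fact: if c ∉ colS S j and s ∈ colS S j then g c s = 0
    have hkey : ∀ c : Fin n, c ∉ colS S j → ∀ s ∈ colS S j, g.val c s = 0 := by
      intro c hc s hs
      rcases lt_trichotomy c s with h | h | h
      · apply hpat c s h
        intro hcs
        apply hc
        rw [mem_colS]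
        rcases mem_colS.mp hs with rfl | hsj
        · exact Or.inr hcs
        · exact Or.inr (hS.2 c s j hcs hsj)
      · exact absurd (h ▸ hs) hc
      · exact hut c s h
    split_ifs with hCD
    · -- C = colS S j : principal minor is 1 by triangularity
      rw [show C = ⟨colS S j, rfl⟩ from Subtype.ext hCD]
      unfold gminor
      have hbt : (Matrix.of fun a b => g.val (enumK ⟨colS S j, rfl⟩ a)
          (enumK ⟨colS S j, rfl⟩ b)).BlockTriangular id := by
        intro a b hab
        exact hut _ _ (enumK_strictMono ⟨colS S j, rfl⟩ hab)
      rw [Matrix.det_of_upperTriangular hbt]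
      apply Finset.prod_eq_one
      intro a _
      exact hdiag _
    · have hsub : ¬ C.1 ⊆ colS S j := by
        intro hsub
        exact hCD (Finset.eq_of_subset_of_card_le hsub (by rw [C.2]))
      obtain ⟨x, hxC, hxD⟩ := Finset.not_subset.mp hsub
      obtain ⟨a, ha⟩ := enumK_surj C hxC
      unfold gminor
      apply Matrix.det_eq_zero_of_row_eq_zero a
      intro b
      rw [Matrix.of_apply, ha]
      exact hkey x hxD _ (enumK_mem ⟨colS S j, rfl⟩ b)

end
end

section
/- Let S be a closed set of pairs and define ρ_S : SL_n(ℂ) → ⨁_{j=1}^n Λ^{|S_j|}ℂ^n by ρ_S(A) := ⨁_{j=1}^n ⋀_{i∈S_j}(A e_i) (the wedges of the columns of A indexed by S_j). Then: (i) ρ_S(Au) = ρ_S(A) for all A ∈ SL_n(ℂ) and u ∈ U_S; (ii) if A, B ∈ SL_n(ℂ) satisfy ρ_S(A) = ρ_S(B), then A⁻¹B ∈ U_S (so ρ_S is injective on right U_S-cosets); (iii) ρ_S(gA) = g·ρ_S(A) for all g, A ∈ SL_n(ℂ), where g acts on ⨁_{j=1}^n Λ^{|S_j|}ℂ^n componentwise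 by exterior powers of its standard action. -/
open Matrix Filter Topology

noncomputable section

/-- The map `ρ_S : SL_n(ℂ) → ⨁_{j=1}^n Λ^{|S_j|} ℂ^n`,
`A ↦ ⨁_{j=1}^n ⋀_{i∈S_j}(A e_i)` (the wedges of the columns of `A` indexed by `S_j`). -/
def rhoS {n : ℕ} (S : Finset (Fin n × Fin n))
    (A : Matrix.SpecialLinearGroup (Fin n) ℂ) :
    (j : Fin n) → ExtP n (colS S j).card :=
  fun j => colWedge (colS S j).card A.val (colS S j) rfl

-- ===== auxiliary lemmas =====
namespace Stmt1Aux

variable {n : ℕ}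

lemma enumK_strictMono {k : ℕ} (C : SubK n k) : StrictMono (enumK C) := by
  intro a b hab
  have := (C.1.orderIsoOfFin C.2).strictMono hab
  exact this

lemma enumK_injective {k : ℕ} (C : SubK n k) : Function.Injective (enumK C) :=
  (enumK_strictMono C).injective

lemma enumK_mem {k : ℕ} (C : SubK n k) (a : Fin k) : enumK C a ∈ C.1 :=
  (C.1.orderIsoOfFin C.2 a).2

lemma exists_enumK_eq {k : ℕ} (C : SubK n k) {x : Fin n} (hx : x ∈ C.1) :
    ∃ a, enumK C a = x := by
  refine ⟨(C.1.orderIsoOfFin C.2).symm ⟨x, hx⟩, ?_⟩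
  simp [enumK]

lemma mem_colS {S : Finset (Fin n × Fin n)} {i j : Fin n} :
    i ∈ colS S j ↔ i = j ∨ (i, j) ∈ S := by
  simp only [colS, Finset.mem_insert, Finset.mem_image, Finset.mem_filter]
  constructor
  · rintro (rfl | ⟨⟨a, b⟩, ⟨hab, rfl⟩, rfl⟩)
    · exact Or.inl rfl
    · exact Or.inr hab
  · rintro (rfl | h)
    · exact Or.inl rfl
    · exact Or.inr ⟨(i, j), ⟨h, rfl⟩, rfl⟩

lemma self_mem_colS {S : Finset (Fin n × Fin n)} (j : Fin n) : j ∈ colS S j :=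
  mem_colS.2 (Or.inl rfl)

lemma le_of_mem_colS {S : Finset (Fin n × Fin n)} (hS : PairsClosed S) {i j : Fin n}
    (h : i ∈ colS S j) : i ≤ j := by
  rcases mem_colS.1 h with rfl | h
  · exact le_rfl
  · exact (hS.1 _ h).le

lemma rhoS_apply {S : Finset (Fin n × Fin n)} (A : Matrix.SpecialLinearGroup (Fin n) ℂ)
    (j : Fin n) (C : SubK n (colS S j).card) :
    rhoS S A j C = gminor (colS S j).card A.val C ⟨colS S j, rfl⟩ := by
  unfold rhoS colWedge wedgeFam gminor
  congr 1
  ext a b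
  simp only [Matrix.of_apply, Matrix.mulVec, dotProduct, stdVec]
  rw [Finset.sum_eq_single (enumK ⟨colS S j, rfl⟩ b)]
  · simp [enumK]
  · intro r _ hr
    exact mul_eq_zero_of_right _ (Pi.single_eq_of_ne hr 1)
  · simp


lemma gminor_eq_det_submatrix {k : ℕ} (g : Matrix (Fin n) (Fin n) ℂ) (C D : SubK n k) :
    gminor k g C D = (g.submatrix (enumK C) (enumK D)).det := rfl

/-- Cauchy–Binet. -/
theorem cauchyBinet {k : ℕ} (P : Matrix (Fin k) (Fin n) ℂ) (Q : Matrix (Fin n) (Fin k) ℂ) :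
    (P * Q).det =
      ∑ E : SubK n k, (P.submatrix id (enumK E)).det * (Q.submatrix (enumK E) id).det := by
  classical
  have h1 : (P * Q).det
      = ∑ r : Fin k → Fin n, (∏ a, P a (r a)) * (Q.submatrix r id).det := by
    have hrow : (fun a : Fin k => (P * Q) a) = fun a => ∑ r : Fin n, P a r • Q r := by
      funext a b
      simp [Matrix.mul_apply, Finset.sum_apply]
    calc (P * Q).det
        = Matrix.detRowAlternating (fun a : Fin k => ∑ r : Fin n, P a r • Q r) := by
          rw [← hrow]; rfl
      _ = ∑ r : Fin k → Fin n, Matrix.detRowAlternating (fun a => P a (r a) • Q (r a)) :=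
          (Matrix.detRowAlternating.toMultilinearMap).map_sum (g := fun a r => P a r • Q r)
      _ = _ := by
          refine Finset.sum_congr rfl (fun r _ => ?_)
          have h := (Matrix.detRowAlternating.toMultilinearMap).map_smul_univ
            (fun a => P a (r a)) (fun a => Q (r a))
          rw [smul_eq_mul] at h
          exact h
  rw [h1]
  -- restrict to injective maps
  have hvanish : ∀ r : Fin k → Fin n, ¬ Function.Injective r →
      (∏ a, P a (r a)) * (Q.submatrix r id).det = 0 := by
    intro r hr
    rw [Function.not_injective_iff] at hr
    obtain ⟨a, b, hab, hne⟩ := hr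
    have : (Q.submatrix r id).det = 0 := by
      apply Matrix.det_zero_of_row_eq hne
      funext c
      simp [Matrix.submatrix_apply, hab]
    rw [this, mul_zero]
  rw [← Finset.sum_filter_of_ne (p := fun r => Function.Injective r)
      (fun r _ hne => by by_contra h; exact hne (hvanish r h))]
  -- reindex by (E, π)
  have hbij :
      ∑ r ∈ Finset.univ.filter (fun r : Fin k → Fin n => Function.Injective r),
        (∏ a, P a (r a)) * (Q.submatrix r id).det
      = ∑ x : SubK n k × Equiv.Perm (Fin k),
          (∏ a, P a (enumK x.1 (x.2 a))) * (Q.submatrix (enumK x.1 ∘ x.2) id).det := by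
    refine (Finset.sum_bij (fun (x : SubK n k × Equiv.Perm (Fin k)) _ => enumK x.1 ∘ x.2)
      ?_ ?_ ?_ (fun a ha => rfl)).symm
    · intro x _
      simp only [Finset.mem_filter, Finset.mem_univ, true_and]
      exact (enumK_injective x.1).comp x.2.injective
    · intro x hx y hy hxy0
      have hxy : enumK x.1 ∘ ⇑x.2 = enumK y.1 ∘ ⇑y.2 := hxy0
      have hsets : x.1 = y.1 := by
        apply Subtype.ext
        apply Finset.ext
        intro z
        constructor
        · intro hz
          obtain ⟨a, ha⟩ := exists_enumK_eq x.1 hz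
          obtain ⟨b, hb⟩ := x.2.surjective a
          have : enumK y.1 (y.2 b) = z := by
            have hcb := congrFun hxy b
            simp only [Function.comp_apply] at hcb
            rw [← hcb, hb, ha]
          rw [← this]; exact enumK_mem _ _
        · intro hz
          obtain ⟨a, ha⟩ := exists_enumK_eq y.1 hz
          obtain ⟨b, hb⟩ := y.2.surjective a
          have : enumK x.1 (x.2 b) = z := by
            have hcb := congrFun hxy b
            simp only [Function.comp_apply] at hcb
            rw [hcb, hb, ha]
          rw [← this]; exact enumK_mem _ _
      obtain ⟨E, π⟩ := x
      obtain ⟨E', π'⟩ := y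
      simp only at hsets
      subst hsets
      simp only [Prod.mk.injEq, true_and]
      ext a
      have hca := congrFun hxy a
      simp only [Function.comp_apply] at hca
      have := enumK_injective E hca
      exact congrArg Fin.val this
    · intro r hr
      simp only [Finset.mem_filter, Finset.mem_univ, true_and] at hr
      have hcard : (Finset.univ.image r).card = k := by
        rw [Finset.card_image_of_injective _ hr, Finset.card_univ, Fintype.card_fin]
      set E : SubK n k := ⟨Finset.univ.image r, hcard⟩ with hE
      have hmem : ∀ a, r a ∈ E.1 := fun a => Finset.mem_image_of_mem r (Finset.mem_univ a)
      set ρ : Fin k → Fin k := fun a => (E.1.orderIsoOfFin E.2).symm ⟨r a, hmem a⟩ with hρ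
      have hρinj : Function.Injective ρ := by
        intro a b hab
        apply hr
        have := congrArg (fun t => ((E.1.orderIsoOfFin E.2) t : Fin n)) hab
        simpa [hρ] using this
      have hρbij : Function.Bijective ρ := Finite.injective_iff_bijective.1 hρinj
      refine ⟨⟨E, Equiv.ofBijective ρ hρbij⟩, Finset.mem_univ _, ?_⟩
      funext a
      simp only [Function.comp_apply, Equiv.ofBijective_apply, hρ, enumK]
      simp
  rw [hbij, Fintype.sum_prod_type]
  refine Finset.sum_congr rfl (fun E _ => ?_)
  have hperm : ∀ π : Equiv.Perm (Fin k),
      (Q.submatrix (enumK E ∘ π) id).det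
        = (Equiv.Perm.sign π : ℂ) * (Q.submatrix (enumK E) id).det := by
    intro π
    have : Q.submatrix (enumK E ∘ π) id = (Q.submatrix (enumK E) id).submatrix π id := by
      ext a b; rfl
    rw [this, Matrix.det_permute]
  have hdetP : (P.submatrix id (enumK E)).det
      = ∑ π : Equiv.Perm (Fin k), (Equiv.Perm.sign π : ℂ) * ∏ a, P a (enumK E (π a)) := by
    rw [← Matrix.det_transpose, Matrix.det_apply]
    refine Finset.sum_congr rfl (fun π _ => ?_)
    rw [Units.smul_def, zsmul_eq_mul]
    congr 1
  rw [hdetP, Finset.sum_mul]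
  refine Finset.sum_congr rfl (fun π _ => ?_)
  rw [hperm π]
  ring


/-- A minor which is upper triangular with unit diagonal has determinant the product of
its diagonal. -/
lemma det_minor_triangular {k : ℕ} (u : Matrix (Fin n) (Fin n) ℂ) (D : SubK n k)
    (htri : ∀ a b : Fin k, b < a → u (enumK D a) (enumK D b) = 0) :
    gminor k u D D = ∏ a, u (enumK D a) (enumK D a) := by
  rw [gminor]
  rw [Matrix.det_of_upperTriangular]
  · rfl
  · intro a b hab
    exact htri a b hab

/-- Key cofactor argument: if all the minors of `u` with column set `D` vanish except the
one with row set `D` which is `1`, then `u` vanishes at all entries `(r, i)` with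
`i ∈ D` and `r ∉ D`. -/
lemma rows_supported {k : ℕ} (u : Matrix (Fin n) (Fin n) ℂ) (D : SubK n k)
    (h1 : gminor k u D D = 1)
    (h0 : ∀ C : SubK n k, C ≠ D → gminor k u C D = 0)
    {r : Fin n} (hr : r ∉ D.1) {i : Fin n} (hi : i ∈ D.1) : u r i = 0 := by
  classical
  set N : Matrix (Fin k) (Fin k) ℂ := Matrix.of fun a b => u (enumK D a) (enumK D b) with hN
  have hdetN : N.det = 1 := h1
  set m : Fin k → ℂ := fun b => u r (enumK D b) with hm
  have hDpos : 0 < D.1.card := Finset.card_pos.2 ⟨i, hi⟩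
  have key : ∀ a : Fin k, (N.updateRow a m).det = 0 := by
    intro a
    set x := enumK D a with hx
    have hxD : x ∈ D.1 := enumK_mem D a
    have hrE : r ∉ D.1.erase x := fun h => hr (Finset.mem_of_mem_erase h)
    have hca : (insert r (D.1.erase x)).card = k := by
      rw [Finset.card_insert_of_notMem hrE, Finset.card_erase_of_mem hxD, D.2]
      have : 0 < k := by rw [← D.2]; exact hDpos
      omega
    set C : SubK n k := ⟨insert r (D.1.erase x), hca⟩ with hC
    have hCD : C ≠ D := by
      intro h
      apply hr
      rw [← congrArg Subtype.val h]
      exact Finset.mem_insert_self _ _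
    set ρf : Fin k → Fin n := Function.update (enumK D) a r with hρf
    have hmem : ∀ a', ρf a' ∈ C.1 := by
      intro a'
      by_cases h : a' = a
      · subst h
        rw [hρf, Function.update_self]
        exact Finset.mem_insert_self _ _
      · rw [hρf, Function.update_of_ne h]
        exact Finset.mem_insert_of_mem (Finset.mem_erase.2
          ⟨fun hh => h (enumK_injective D hh), enumK_mem D a'⟩)
    have hρinj : Function.Injective ρf := by
      intro a' b' hab
      by_cases h1' : a' = a <;> by_cases h2' : b' = a
      · rw [h1', h2']
      · exfalso; rw [hρf] at hab
        rw [h1'] at hab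
        rw [Function.update_self, Function.update_of_ne h2'] at hab
        exact hr (hab ▸ enumK_mem D b')
      · exfalso; rw [hρf] at hab
        rw [h2'] at hab
        rw [Function.update_self, Function.update_of_ne h1'] at hab
        exact hr (hab ▸ enumK_mem D a')
      · rw [hρf, Function.update_of_ne h1', Function.update_of_ne h2'] at hab
        exact enumK_injective D hab
    set ρ' : Fin k → {y // y ∈ C.1} := fun a' => ⟨ρf a', hmem a'⟩ with hρ'
    have hρ'inj : Function.Injective ρ' := fun a' b' h =>
      hρinj (congrArg Subtype.val h)
    have hρ'bij : Function.Bijective ρ' := by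
      rw [Fintype.bijective_iff_injective_and_card]
      refine ⟨hρ'inj, ?_⟩
      rw [Fintype.card_fin, Fintype.card_coe]
      exact hca.symm
    set π : Equiv.Perm (Fin k) :=
      (Equiv.ofBijective ρ' hρ'bij).trans (C.1.orderIsoOfFin C.2).toEquiv.symm with hπ
    have hπ' : ∀ a', enumK C (π a') = ρf a' := by
      intro a'
      show ((C.1.orderIsoOfFin C.2) ((C.1.orderIsoOfFin C.2).toEquiv.symm (ρ' a')) : Fin n) = ρf a'
      erw [OrderIso.apply_symm_apply]
    have hupd : N.updateRow a m
        = (Matrix.of fun a' b => u (enumK C a') (enumK D b)).submatrix π id := by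
      ext a' b
      rw [Matrix.submatrix_apply, Matrix.of_apply, hπ' a']
      by_cases h : a' = a
      · subst h
        rw [Matrix.updateRow_self, hρf, Function.update_self, hm]
        rfl
      · rw [Matrix.updateRow_ne h, hρf, Function.update_of_ne h, hN]
        rfl
    rw [hupd]
    have : ((Matrix.of fun a' b => u (enumK C a') (enumK D b)).submatrix π id).det
        = Equiv.Perm.sign π * (Matrix.of fun a' b => u (enumK C a') (enumK D b)).det :=
      Matrix.det_permute π _
    rw [this]
    have : (Matrix.of fun a' b => u (enumK C a') (enumK D b)).det = 0 := h0 C hCD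
    rw [this, mul_zero]
  have hcram : Matrix.cramer Nᵀ m = 0 := by
    funext a
    rw [Matrix.cramer_apply, Matrix.updateCol_transpose, Matrix.det_transpose]
    exact key a
  have hmv := Matrix.mulVec_cramer Nᵀ m
  rw [hcram, Matrix.mulVec_zero, Matrix.det_transpose, hdetN, one_smul] at hmv
  obtain ⟨b, hb⟩ := exists_enumK_eq D hi
  have : m b = 0 := by rw [← hmv]; rfl
  rw [hm] at this
  rw [← hb]
  exact this

lemma gminor_one {k : ℕ} (C D : SubK n k) :
    gminor k (1 : Matrix (Fin n) (Fin n) ℂ) C D = if C = D then 1 else 0 := by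
  classical
  split_ifs with h
  · subst h
    rw [gminor]
    have : (Matrix.of fun a b : Fin k => (1 : Matrix (Fin n) (Fin n) ℂ) (enumK C a) (enumK C b))
        = (1 : Matrix (Fin k) (Fin k) ℂ) := by
      ext a b
      by_cases hab : a = b
      · subst hab; simp [Matrix.one_apply]
      · rw [Matrix.of_apply, Matrix.one_apply_ne (fun hh => hab (enumK_injective C hh)),
          Matrix.one_apply_ne hab]
    rw [this, Matrix.det_one]
  · have hsub : ¬ D.1 ⊆ C.1 := by
      intro hsub
      exact h (Subtype.ext (Finset.eq_of_subset_of_card_le hsub (by rw [C.2, D.2])).symm)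
    obtain ⟨x, hxD, hxC⟩ := Finset.not_subset.1 hsub
    obtain ⟨b, hb⟩ := exists_enumK_eq D hxD
    rw [gminor]
    apply Matrix.det_eq_zero_of_column_eq_zero b
    intro a
    rw [Matrix.of_apply, Matrix.one_apply_ne]
    intro hh
    apply hxC
    rw [← hb, ← hh]
    exact enumK_mem C a


lemma uset_vanish {S : Finset (Fin n × Fin n)} (hS : PairsClosed S)
    {u : Matrix.SpecialLinearGroup (Fin n) ℂ} (hu : u ∈ USet S) {j : Fin n}
    {i r : Fin n} (hi : i ∈ colS S j) (hr : r ∉ colS S j) : u.val r i = 0 := by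
  rcases lt_trichotomy r i with h | h | h
  · by_cases hmem : (r, i) ∈ S
    · exfalso
      apply hr
      rcases mem_colS.1 hi with rfl | hij
      · exact mem_colS.2 (Or.inr hmem)
      · exact mem_colS.2 (Or.inr (hS.2 r i j hmem hij))
    · exact hu.2.2 r i h hmem
  · exact absurd (h ▸ hi) hr
  · exact hu.1 r i h

lemma equivariant {S : Finset (Fin n × Fin n)}
    (g A : Matrix.SpecialLinearGroup (Fin n) ℂ) :
    rhoS S (g * A) = fun j => extAct (colS S j).card g.val (rhoS S A j) := by
  funext j C
  rw [rhoS_apply]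
  show gminor _ (g * A).val C ⟨colS S j, rfl⟩
    = ∑ D : SubK n (colS S j).card, gminor _ g.val C D * rhoS S A j D
  have hval : (g * A).val = g.val * A.val := rfl
  rw [hval, gminor_eq_det_submatrix]
  have hsub : (g.val * A.val).submatrix (enumK C) (enumK (⟨colS S j, rfl⟩ : SubK n (colS S j).card))
      = (g.val.submatrix (enumK C) id) * (A.val.submatrix id (enumK (⟨colS S j, rfl⟩ : SubK n (colS S j).card))) := by
    ext a b
    simp [Matrix.mul_apply]
  rw [hsub, cauchyBinet]
  refine Finset.sum_congr rfl fun E _ => ?_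
  rw [Matrix.submatrix_submatrix, Matrix.submatrix_submatrix, rhoS_apply,
    gminor_eq_det_submatrix, gminor_eq_det_submatrix]
  simp [Function.comp_def]

lemma right_invariant {S : Finset (Fin n × Fin n)} (hS : PairsClosed S)
    (A u : Matrix.SpecialLinearGroup (Fin n) ℂ) (hu : u ∈ USet S) :
    rhoS S (A * u) = rhoS S A := by
  funext j C
  rw [rhoS_apply, rhoS_apply]
  set Dj : SubK n (colS S j).card := ⟨colS S j, rfl⟩ with hDj
  have hval : (A * u).val = A.val * u.val := rfl
  rw [hval]
  have hM : (Matrix.of fun a b => (A.val * u.val) (enumK C a) (enumK Dj b))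
      = (Matrix.of fun a b => A.val (enumK C a) (enumK Dj b)) *
        (Matrix.of fun a b => u.val (enumK Dj a) (enumK Dj b)) := by
    ext a b
    rw [Matrix.of_apply, Matrix.mul_apply, Matrix.mul_apply]
    rw [show (∑ r : Fin n, A.val (enumK C a) r * u.val r (enumK Dj b))
        = ∑ r ∈ colS S j, A.val (enumK C a) r * u.val r (enumK Dj b) from
      (Finset.sum_subset (Finset.subset_univ _) (fun r _ hrm =>
        mul_eq_zero_of_right _ (uset_vanish hS hu (enumK_mem Dj b) hrm))).symm]
    rw [← Finset.sum_attach (colS S j) (fun r => A.val (enumK C a) r * u.val r (enumK Dj b))]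
    exact (Fintype.sum_equiv ((colS S j).orderIsoOfFin rfl).toEquiv _ _ (fun a' => rfl)).symm
  rw [gminor, gminor, hM, Matrix.det_mul]
  have hone : (Matrix.of fun a b => u.val (enumK Dj a) (enumK Dj b)).det = 1 := by
    have htri := det_minor_triangular u.val Dj
      (fun a b hab => hu.1 _ _ (enumK_strictMono Dj hab))
    rw [gminor] at htri
    rw [htri]
    exact Finset.prod_eq_one (fun a _ => hu.2.1 _)
  rw [hone, mul_one]

end Stmt1Aux

/-- `ρ_S` is invariant under right multiplication by `U_S`, injective
on right `U_S`-cosets, and `SL_n(ℂ)`-equivariant for the left multiplication action. -/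
theorem stmt1 {n : ℕ} (hn : 1 ≤ n) (S : Finset (Fin n × Fin n)) (hS : PairsClosed S) :
    (∀ (A : Matrix.SpecialLinearGroup (Fin n) ℂ)
        (u : Matrix.SpecialLinearGroup (Fin n) ℂ), u ∈ USet S →
        rhoS S (A * u) = rhoS S A) ∧
    (∀ A B : Matrix.SpecialLinearGroup (Fin n) ℂ,
        rhoS S A = rhoS S B → A⁻¹ * B ∈ USet S) ∧
    (∀ g A : Matrix.SpecialLinearGroup (Fin n) ℂ,
        rhoS S (g * A) = fun j => extAct (colS S j).card g.val (rhoS S A j)) := by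
  refine ⟨fun A u hu => Stmt1Aux.right_invariant hS A u hu, ?_,
    fun g A => Stmt1Aux.equivariant g A⟩
  intro A B hAB
  set u : Matrix.SpecialLinearGroup (Fin n) ℂ := A⁻¹ * B with hu
  have h1 : rhoS S u = rhoS S (1 : Matrix.SpecialLinearGroup (Fin n) ℂ) := by
    have e1 := Stmt1Aux.equivariant (n := n) (S := S) A⁻¹ B
    have e2 := Stmt1Aux.equivariant (n := n) (S := S) A⁻¹ A
    rw [inv_mul_cancel] at e2
    rw [hu, e1, ← hAB, ← e2]
  have hco : ∀ (j : Fin n) (C : SubK n (colS S j).card),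
      gminor (colS S j).card u.val C ⟨colS S j, rfl⟩
        = if C = (⟨colS S j, rfl⟩ : SubK n (colS S j).card) then 1 else 0 := by
    intro j C
    have hc := congrFun (congrFun h1 j) C
    rw [Stmt1Aux.rhoS_apply, Stmt1Aux.rhoS_apply] at hc
    rw [hc]
    have hone : ((1 : Matrix.SpecialLinearGroup (Fin n) ℂ)).val
        = (1 : Matrix (Fin n) (Fin n) ℂ) := rfl
    rw [hone, Stmt1Aux.gminor_one]
  have h1' : ∀ j : Fin n, gminor (colS S j).card u.val ⟨colS S j, rfl⟩ ⟨colS S j, rfl⟩ = 1 :=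
    fun j => by rw [hco j _, if_pos rfl]
  have h0' : ∀ (j : Fin n) (C : SubK n (colS S j).card),
      C ≠ (⟨colS S j, rfl⟩ : SubK n (colS S j).card) →
      gminor (colS S j).card u.val C ⟨colS S j, rfl⟩ = 0 :=
    fun j C hC => by rw [hco j C, if_neg hC]
  have hsupp : ∀ (j r : Fin n), r ∉ colS S j → ∀ i : Fin n, i ∈ colS S j →
      u.val r i = 0 :=
    fun j r hr i hi => Stmt1Aux.rows_supported u.val ⟨colS S j, rfl⟩ (h1' j) (h0' j) hr hi
  refine ⟨?_, ?_, ?_⟩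
  · intro i j hji
    exact hsupp j i (fun hmem =>
      absurd (Stmt1Aux.le_of_mem_colS hS hmem) (not_le.2 hji)) j (Stmt1Aux.self_mem_colS j)
  · -- diagonal entries are 1, by strong induction
    have main : ∀ m : ℕ, ∀ i : Fin n, i.val = m → u.val i i = 1 := by
      intro m
      induction m using Nat.strong_induction_on with
      | _ m IH =>
        intro i him
        have hdet := h1' i
        have htri : ∀ a b : Fin (colS S i).card, b < a →
            u.val (enumK (⟨colS S i, rfl⟩ : SubK n (colS S i).card) a)
              (enumK (⟨colS S i, rfl⟩ : SubK n (colS S i).card) b) = 0 := by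
          intro a b hab
          have hlt := Stmt1Aux.enumK_strictMono (⟨colS S i, rfl⟩ : SubK n (colS S i).card) hab
          refine hsupp (enumK (⟨colS S i, rfl⟩ : SubK n (colS S i).card) b) _ ?_ _
            (Stmt1Aux.self_mem_colS _)
          intro hmem
          exact absurd (Stmt1Aux.le_of_mem_colS hS hmem) (not_le.2 hlt)
        rw [Stmt1Aux.det_minor_triangular u.val ⟨colS S i, rfl⟩ htri] at hdet
        obtain ⟨a0, ha0⟩ := Stmt1Aux.exists_enumK_eq
          (⟨colS S i, rfl⟩ : SubK n (colS S i).card) (Stmt1Aux.self_mem_colS i)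
        rw [Finset.prod_eq_single a0 ?h₀ ?h₁] at hdet
        case h₀ =>
          intro b _ hb
          have hmem := Stmt1Aux.enumK_mem (⟨colS S i, rfl⟩ : SubK n (colS S i).card) b
          have hne : enumK (⟨colS S i, rfl⟩ : SubK n (colS S i).card) b ≠ i :=
            fun h => hb (Stmt1Aux.enumK_injective _ (h.trans ha0.symm))
          have hltv : (enumK (⟨colS S i, rfl⟩ : SubK n (colS S i).card) b).val < m := by
            have hlt := lt_of_le_of_ne (Stmt1Aux.le_of_mem_colS hS hmem) hne
            rw [Fin.lt_def] at hlt
            omega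
          exact IH _ hltv _ rfl
        case h₁ =>
          intro h
          exact absurd (Finset.mem_univ a0) h
        rw [ha0] at hdet
        exact hdet
    intro i
    exact main i.val i rfl
  · intro i j hij hnot
    refine hsupp j i ?_ j (Stmt1Aux.self_mem_colS j)
    intro hmem
    rcases Stmt1Aux.mem_colS.1 hmem with rfl | h
    · exact absurd hij (lt_irrefl _)
    · exact hnot h

end
end

section
/- Let n ≥ 1, let σ be a permutation of {1,…,n}, and for each m ∈ ℕ let b_{11}^{(m)},…,b_{nn}^{(m)} be nonzero complex numbers. Assume that for each i ∈ {1,…,n} the sequence m ↦ b_{σ(1)σ(1)}^{(m)}·b_{σ(2)σ(2)}^{(m)}⋯b_{σ(i)σ(i)}^{(m)} converges in ℂ, and that there exists s ∈ {1,…,n} with lim_{m→∞} b_{ss}^{(m)} = 0. Define 𝒞_m := (b_{σ(1)σ(1)}^{(m)})^n (b_{σ(2)σ(2)}^{(m)})^{n−1} ⋯ (b_{σ(n)σ(n)}^{(m)})^1. Then lim_{m→∞} 𝒞_m = 0, and for every j ∈ {1,…,n} one has lim_{m→∞} 𝒞_m² · b_{jj}^{(m)} = 0 and lim_{m→∞}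 𝒞_m² / b_{jj}^{(m)} = 0. -/
open Matrix Filter Topology

noncomputable section

/-- Same as Statement 3, but the partial products and the weighted
product `𝒞_m` are taken along a permutation `σ` of `{1,…,n}`:
`𝒞_m := (b_{σ(1)σ(1)}^{(m)})^n ⋯ (b_{σ(n)σ(n)}^{(m)})^1`. If each partial product
`m ↦ b_{σ(1)σ(1)}^{(m)}⋯b_{σ(i)σ(i)}^{(m)}` converges and some diagonal sequence
`m ↦ b_{ss}^{(m)}` tends to `0`, then `𝒞_m → 0` and, for every `j`,
`𝒞_m² · b_{jj}^{(m)} → 0` and `𝒞_m² / b_{jj}^{(m)} → 0`. -/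
theorem stmt4 {n : ℕ} (hn : 1 ≤ n) (σ : Equiv.Perm (Fin n)) (b : ℕ → Fin n → ℂ)
    (hne : ∀ m (i : Fin n), b m i ≠ 0)
    (hconv : ∀ i : Fin n, ∃ L : ℂ,
      Tendsto (fun m => ∏ k ∈ Finset.Iic i, b m (σ k)) atTop (𝓝 L))
    (s : Fin n) (hs : Tendsto (fun m => b m s) atTop (𝓝 0))
    (C : ℕ → ℂ) (hC : ∀ m, C m = ∏ i : Fin n, (b m (σ i)) ^ (n - (i : ℕ))) :
    Tendsto C atTop (𝓝 0) ∧
      ∀ j : Fin n,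
        Tendsto (fun m => (C m) ^ 2 * b m j) atTop (𝓝 0) ∧
        Tendsto (fun m => (C m) ^ 2 / b m j) atTop (𝓝 0) := by
  classical
  choose L hL using hconv
  set t : Fin n := σ.symm s with ht
  have hbne : ∀ m (i : Fin n), b m (σ i) ≠ 0 := fun m i => hne m (σ i)
  set P : Fin n → ℕ → ℂ := fun i m => ∏ k ∈ Finset.Iic i, b m (σ k) with hPdef
  set Q : Fin n → ℕ → ℂ := fun i m => ∏ k ∈ Finset.Iio i, b m (σ k) with hQdef
  have hLP : ∀ i, Tendsto (P i) atTop (𝓝 (L i)) := fun i => hL i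
  have hPne : ∀ i m, P i m ≠ 0 := fun i m =>
    Finset.prod_ne_zero_iff.2 fun k _ => hbne m k
  have hQne : ∀ i m, Q i m ≠ 0 := fun i m =>
    Finset.prod_ne_zero_iff.2 fun k _ => hbne m k
  have hPQ : ∀ (i : Fin n) m, P i m = b m (σ i) * Q i m := by
    intro i m
    rw [hPdef, hQdef]
    simp only
    rw [← Finset.Iio_insert, Finset.prod_insert (by simp)]
  have hQlim : ∀ i : Fin n, ∃ M, Tendsto (Q i) atTop (𝓝 M) := by
    intro i
    rcases eq_or_ne i.val 0 with h0 | h0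
    · refine ⟨1, ?_⟩
      have hq : Q i = fun _ => 1 := by
        funext m
        have he : Finset.Iio i = ∅ := by
          ext k; simp [Fin.lt_def, h0]
        simp [hQdef, he]
      rw [hq]; exact tendsto_const_nhds
    · have hp' : i.val - 1 < n := lt_of_le_of_lt (Nat.pred_le _) i.isLt
      have hIio : Finset.Iio i = Finset.Iic ⟨i.val - 1, hp'⟩ := by
        ext k
        simp only [Finset.mem_Iio, Finset.mem_Iic, Fin.lt_def, Fin.le_def]
        omega
      refine ⟨L ⟨i.val - 1, hp'⟩, ?_⟩
      have hq : Q i = P ⟨i.val - 1, hp'⟩ := by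
        funext m; rw [hQdef, hPdef]; simp only; rw [hIio]
      rw [hq]; exact hLP _
  have hLt : L t = 0 := by
    obtain ⟨M, hM⟩ := hQlim t
    have h1 : Tendsto (P t) atTop (𝓝 0) := by
      have he : P t = fun m => b m s * Q t m := by
        funext m; rw [hPQ t m, ht, Equiv.apply_symm_apply]
      rw [he]
      simpa using hs.mul hM
    exact tendsto_nhds_unique (hLP t) h1
  have hCP : ∀ m, C m = ∏ k : Fin n, P k m := by
    intro m
    rw [hC m, hPdef]
    simp only
    rw [Finset.prod_comm' (s' := fun i : Fin n => Finset.Ici i) (t' := Finset.univ)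
      (by intro x y; simp [Finset.mem_Iic, Finset.mem_Ici])]
    refine (Finset.prod_congr rfl fun i _ => ?_).symm
    rw [Finset.prod_const, Fin.card_Ici]
  have hCtend : Tendsto C atTop (𝓝 0) := by
    have h1 : Tendsto (fun m => ∏ k : Fin n, P k m) atTop (𝓝 (∏ k : Fin n, L k)) :=
      tendsto_finset_prod _ fun k _ => hLP k
    have h2 : (∏ k : Fin n, L k) = 0 := Finset.prod_eq_zero (Finset.mem_univ t) hLt
    rw [show C = fun m => ∏ k : Fin n, P k m from funext hCP]
    rwa [h2] at h1
  have hDlim : ∀ i : Fin n, ∃ D, Tendsto (fun m => C m / Q i m) atTop (𝓝 D) := by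
    intro i
    rcases eq_or_ne i.val 0 with h0 | h0
    · refine ⟨0, ?_⟩
      have hq : ∀ m, Q i m = 1 := by
        intro m
        have he : Finset.Iio i = ∅ := by
          ext k; simp [Fin.lt_def, h0]
        simp [hQdef, he]
      simpa [hq] using hCtend
    · have hp' : i.val - 1 < n := lt_of_le_of_lt (Nat.pred_le _) i.isLt
      set p : Fin n := ⟨i.val - 1, hp'⟩ with hpdef
      have hIio : Finset.Iio i = Finset.Iic p := by
        ext k
        simp only [Finset.mem_Iio, Finset.mem_Iic, Fin.lt_def, Fin.le_def, hpdef]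
        omega
      have hq : ∀ m, Q i m = P p m := by
        intro m; rw [hQdef, hPdef]; simp only; rw [hIio]
      refine ⟨∏ k ∈ Finset.univ.erase p, L k, ?_⟩
      have heq : (fun m => C m / Q i m) = fun m => ∏ k ∈ Finset.univ.erase p, P k m := by
        funext m
        rw [hq, hCP, div_eq_iff (hPne p m), Finset.prod_erase_mul _ _ (Finset.mem_univ p)]
      rw [heq]
      exact tendsto_finset_prod _ fun k _ => hLP k
  refine ⟨hCtend, fun j => ?_⟩
  set i : Fin n := σ.symm j with hi
  have hij : σ i = j := Equiv.apply_symm_apply σ j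
  have hbj : ∀ m, b m j = P i m / Q i m := by
    intro m
    rw [← hij, hPQ, mul_div_assoc, div_self (hQne i m), mul_one]
  obtain ⟨D, hD⟩ := hDlim i
  obtain ⟨M, hM⟩ := hQlim i
  constructor
  · have heq : (fun m => C m ^ 2 * b m j) = fun m => C m * (C m / Q i m) * P i m := by
      funext m
      rw [hbj m]
      field_simp
    rw [heq]
    simpa using (hCtend.mul hD).mul (hLP i)
  · have hEeq : (fun m => C m / P i m) = fun m => ∏ k ∈ Finset.univ.erase i, P k m := by
      funext m
      rw [hCP, div_eq_iff (hPne i m), Finset.prod_erase_mul _ _ (Finset.mem_univ i)]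
    have hE : Tendsto (fun m => C m / P i m) atTop (𝓝 (∏ k ∈ Finset.univ.erase i, L k)) := by
      rw [hEeq]; exact tendsto_finset_prod _ fun k _ => hLP k
    have heq : (fun m => C m ^ 2 / b m j) = fun m => C m * (C m / P i m) * Q i m := by
      funext m
      rw [hbj m]
      field_simp [hPne i m, hQne i m]
    rw [heq]
    simpa using (hCtend.mul hE).mul hM

end
end

section
/- Let S be a closed set of pairs and let b be an upper triangular n×n complex matrix such that b_{ij} = 0 whenever i ∈ S_j and i ≠ j. Let s, t ∈ {1,…,n} with s ∉ S_t, and set C := (S_t∖{t}) ∪ {s}. Let f_C be the linear functional on Λ^{|S_t|}ℂ^n reading off the coordinate of the standard basis vector ⋀_{i∈C} e_i. Then f_C( ⋀_{i∈S_t}(b e_i) ) = ε · b_{st} · ∏_{i∈S_t∖{t}} b_{ii}, where ε ∈ {1,−1} is the sign determined by (⋀_{i∈S_t∖{t}} e_i) ∧ e_s = ε · ⋀_{i∈C} e_i. In other words, the component of ⋀_{i∈S_t}(b e_i) along (⋀_{i∈S_t∖{t}} e_i) ∧ e_s equals b_{st} · ∏_{i∈S_t∖{t}} b_{ii}. -/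
open Matrix Filter Topology

noncomputable section

/-- det of a matrix whose last column vanishes except at the corner, and whose
top-left block is upper triangular. -/
lemma detAux {m : ℕ} (T : Matrix (Fin (m+1)) (Fin (m+1)) ℂ)
    (htri : ∀ a c : Fin m, c < a → T a.castSucc c.castSucc = 0)
    (hcol : ∀ a : Fin m, T a.castSucc (Fin.last m) = 0) :
    T.det = T (Fin.last m) (Fin.last m)
      * ∏ a : Fin m, T a.castSucc a.castSucc := by
  rw [Matrix.det_succ_column T (Fin.last m)]
  rw [Finset.sum_eq_single (Fin.last m)]
  · have h1 : T.submatrix (Fin.last m).succAbove (Fin.last m).succAbove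
        = T.submatrix Fin.castSucc Fin.castSucc := by
      rw [Fin.succAbove_last]
    rw [h1]
    have h2 : (T.submatrix Fin.castSucc Fin.castSucc).det
        = ∏ a : Fin m, T a.castSucc a.castSucc := by
      apply Matrix.det_of_upperTriangular
      intro i j hij
      exact htri i j hij
    rw [h2]
    have h3 : ((-1 : ℂ)) ^ ((Fin.last m : ℕ) + (Fin.last m : ℕ)) = 1 := by
      rw [← two_mul]
      simp [pow_mul]
    rw [h3, one_mul]
  · intro i _ hi
    obtain ⟨a, rfl⟩ := Fin.exists_castSucc_eq.2 hi
    rw [hcol a, mul_zero, zero_mul]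
  · simp

/-- Let `S` be closed and `b` upper triangular with `b_{ij} = 0`
whenever `i ∈ S_j`, `i ≠ j`. Let `s,t` with `s ∉ S_t` and `C := (S_t∖{t}) ∪ {s}`.
If `ε ∈ {1,−1}` satisfies `(⋀_{i∈S_t∖{t}} e_i) ∧ e_s = ε · ⋀_{i∈C} e_i`, then the
coordinate of `⋀_{i∈S_t}(b e_i)` along the standard basis vector `⋀_{i∈C} e_i` is
`ε · b_{st} · ∏_{i∈S_t∖{t}} b_{ii}`. Here the wedge `(⋀_{i∈S_t∖{t}} e_i) ∧ e_s` is the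
wedge of the family consisting of the `e_i`, `i ∈ S_t∖{t}`, in increasing order,
followed by `e_s`. -/
theorem stmt5 {n : ℕ} (hn : 1 ≤ n) (S : Finset (Fin n × Fin n)) (hS : PairsClosed S)
    (b : Matrix (Fin n) (Fin n) ℂ)
    (hut : ∀ i j : Fin n, j < i → b i j = 0)
    (hz : ∀ i j : Fin n, i ∈ colS S j → i ≠ j → b i j = 0)
    (s t : Fin n) (hs : s ∉ colS S t)
    (C : Finset (Fin n)) (hCdef : C = insert s ((colS S t).erase t))
    (hCc : C.card = (colS S t).card)
    (ε : ℂ) (hεsign : ε = 1 ∨ ε = -1)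
    (hε : wedgeFam (colS S t).card
        (fun a => if h : (a : ℕ) < ((colS S t).erase t).card then
            stdVec (((colS S t).erase t).orderIsoOfFin rfl ⟨(a : ℕ), h⟩)
          else stdVec s)
        = ε • wedgeBasis (colS S t).card C hCc) :
    colWedge (colS S t).card b (colS S t) rfl ⟨C, hCc⟩
      = ε * b s t * ∏ i ∈ (colS S t).erase t, b i i := by
  classical
  -- notation
  have ht : t ∈ colS S t := Finset.mem_insert_self _ _
  set E : Finset (Fin n) := (colS S t).erase t with hE
  set m : ℕ := E.card with hm
  have hk : (colS S t).card = m + 1 := (Finset.card_erase_add_one ht).symm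
  have hmax : ∀ i ∈ colS S t, i ≤ t := by
    intro i hi
    rcases Finset.mem_insert.1 hi with h | h
    · exact le_of_eq h
    · obtain ⟨p, hp, rfl⟩ := Finset.mem_image.1 h
      obtain ⟨hpS, hp2⟩ := Finset.mem_filter.1 hp
      exact le_of_lt (hp2 ▸ hS.1 p hpS)
  have hEsub : ∀ i ∈ E, i ∈ colS S t := fun i hi => Finset.mem_of_mem_erase hi
  have hEne : ∀ i ∈ E, i ≠ t := fun i hi => Finset.ne_of_mem_erase hi
  have hElt : ∀ i ∈ E, i < t := fun i hi =>
    lt_of_le_of_ne (hmax i (hEsub i hi)) (hEne i hi)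
  have hsE : s ∉ E := fun h => hs (hEsub s h)
  -- enumerations
  set cE : Fin m → Fin n := fun a => E.orderEmbOfFin rfl a with hcE
  set g : Fin (m+1) → Fin n := Fin.snoc cE t with hg
  set d' : Fin (m+1) → Fin n := Fin.snoc cE s with hd'
  have hcEmem : ∀ a, cE a ∈ E := fun a => Finset.orderEmbOfFin_mem E rfl a
  have hcEmono : StrictMono cE := (E.orderEmbOfFin rfl).strictMono
  have hgOE : g = ⇑((colS S t).orderEmbOfFin hk) := by
    apply Finset.orderEmbOfFin_unique hk
    · intro x
      refine Fin.lastCases ?_ ?_ x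
      · rw [hg, Fin.snoc_last]; exact ht
      · intro a; rw [hg, Fin.snoc_castSucc]; exact hEsub _ (hcEmem a)
    · intro i j hij
      rcases Fin.eq_castSucc_or_eq_last j with ⟨c, rfl⟩ | rfl
      · obtain ⟨a, rfl⟩ := Fin.exists_castSucc_eq.2
          (Fin.ne_last_of_lt hij)
        rw [hg, Fin.snoc_castSucc, Fin.snoc_castSucc]
        exact hcEmono (by exact_mod_cast hij)
      · obtain ⟨a, rfl⟩ := Fin.exists_castSucc_eq.2 (Fin.ne_last_of_lt hij)
        rw [hg, Fin.snoc_last, Fin.snoc_castSucc]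
        exact hElt _ (hcEmem a)
  -- d' is a bijection onto C
  have hd'mem : ∀ a, d' a ∈ C := by
    intro a
    refine Fin.lastCases ?_ ?_ a
    · rw [hd', Fin.snoc_last, hCdef]; exact Finset.mem_insert_self _ _
    · intro a; rw [hd', Fin.snoc_castSucc, hCdef]
      exact Finset.mem_insert_of_mem (hcEmem a)
  have hd'inj : Function.Injective d' := by
    intro i j hij
    rcases Fin.eq_castSucc_or_eq_last i with ⟨a, rfl⟩ | rfl <;>
      rcases Fin.eq_castSucc_or_eq_last j with ⟨c, rfl⟩ | rfl <;>
      simp only [hd', Fin.snoc_last, Fin.snoc_castSucc] at hij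
    · exact congrArg Fin.castSucc (hcEmono.injective hij)
    · exact absurd (hij ▸ hcEmem a : s ∈ E) hsE
    · exact absurd (hij.symm ▸ hcEmem c : s ∈ E) hsE
    · rfl
  have hCcard : C.card = m + 1 := hCc.trans hk
  -- the permutation π
  set d'' : Fin (m+1) → {x // x ∈ C} := fun a => ⟨d' a, hd'mem a⟩ with hd''
  have hd''bij : Function.Bijective d'' := by
    rw [Fintype.bijective_iff_injective_and_card]
    constructor
    · intro i j hij
      exact hd'inj (congrArg Subtype.val hij)
    · simp [Fintype.card_coe, hCcard]
  set eD : Fin (m+1) ≃ {x // x ∈ C} := Equiv.ofBijective d'' hd''bij with heD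
  set eC : Fin (m+1) ≃ {x // x ∈ C} := (C.orderIsoOfFin hCcard).toEquiv with heC
  set π : Equiv.Perm (Fin (m+1)) := eC.trans eD.symm with hπ
  have hπspec : ∀ a, d' (π a) = C.orderEmbOfFin hCcard a := by
    intro a
    have : d'' (π a) = eC a := by
      rw [hπ]; exact (eD.apply_symm_apply (eC a))
    have h2 := congrArg Subtype.val this
    rw [← Finset.coe_orderIsoOfFin_apply]
    exact h2
  -- the equivalence between Fin (colS S t).card and Fin (m+1)
  set e : Fin (m+1) ≃ Fin ((colS S t).card) := finCongr hk.symm with he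
  set cf : Fin (m+1) → Fin n := fun a => C.orderEmbOfFin hCcard a with hcf
  have hcfe : ∀ a : Fin (m+1), (↑(C.orderIsoOfFin hCc (e a)) : Fin n) = cf a := by
    intro a
    rw [Finset.coe_orderIsoOfFin_apply, hcf]
    rw [Finset.orderEmbOfFin_eq_orderEmbOfFin_iff]
    simp [he]
  have hge : ∀ a : Fin (m+1), (↑((colS S t).orderIsoOfFin rfl (e a)) : Fin n) = g a := by
    intro a
    rw [Finset.coe_orderIsoOfFin_apply, hgOE]
    rw [Finset.orderEmbOfFin_eq_orderEmbOfFin_iff]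
    simp [he]
  -- the family in hε, transported
  have hfam : ∀ a : Fin (m+1),
      (if h : ((e a : Fin ((colS S t).card)) : ℕ) < E.card then
          stdVec (((colS S t).erase t).orderIsoOfFin rfl ⟨((e a : Fin ((colS S t).card)) : ℕ), h⟩)
        else stdVec s) = stdVec (d' a) := by
    intro a
    have hea : ((e a : Fin ((colS S t).card)) : ℕ) = (a : ℕ) := by simp [he]
    rcases Fin.eq_castSucc_or_eq_last a with ⟨c, rfl⟩ | rfl
    · have hlt : ((e c.castSucc : Fin ((colS S t).card)) : ℕ) < E.card := by
        rw [hea]; exact c.isLt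
      rw [dif_pos hlt]
      rw [hd', Fin.snoc_castSucc, hcE]
      congr 1
    · have hlt : ¬ ((e (Fin.last m) : Fin ((colS S t).card)) : ℕ) < E.card := by
        rw [hea]; simp [hm]
      rw [dif_neg hlt, hd', Fin.snoc_last]
  -- sign π = ε
  have hsign : ((Equiv.Perm.sign π : ℤ) : ℂ) = ε := by
    have hev := congrFun hε ⟨C, hCc⟩
    simp only [wedgeFam, wedgeBasis, Pi.smul_apply, smul_eq_mul] at hev
    -- left side of hev
    have hL : Matrix.det (Matrix.of fun a b : Fin ((colS S t).card) =>
        (if h : ((b : Fin ((colS S t).card)) : ℕ) < ((colS S t).erase t).card then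
            stdVec (((colS S t).erase t).orderIsoOfFin rfl ⟨(b : ℕ), h⟩)
          else stdVec s) (enumK ⟨C, hCc⟩ a))
        = ((Equiv.Perm.sign π : ℤ) : ℂ) := by
      rw [← Matrix.det_submatrix_equiv_self e]
      have : ((Matrix.of fun a b : Fin ((colS S t).card) =>
          (if h : ((b : Fin ((colS S t).card)) : ℕ) < ((colS S t).erase t).card then
              stdVec (((colS S t).erase t).orderIsoOfFin rfl ⟨(b : ℕ), h⟩)
            else stdVec s) (enumK ⟨C, hCc⟩ a)).submatrix e e)
          = π.permMatrix ℂ := by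
        ext a a'
        simp only [Matrix.submatrix_apply, Matrix.of_apply]
        rw [hfam a']
        show stdVec (d' a') (enumK ⟨C, hCc⟩ (e a)) = _
        have h1 : enumK ⟨C, hCc⟩ (e a) = cf a := hcfe a
        have h2 : d' (π a) = cf a := hπspec a
        rw [h1, ← h2]
        simp only [stdVec, Pi.single_apply, Equiv.Perm.permMatrix,
          PEquiv.toMatrix_apply, Equiv.toPEquiv_apply, Option.mem_def,
          Option.some.injEq]
        by_cases h : π a = a'
        · simp [h]
        · have : d' (π a) ≠ d' a' := fun hc => h (hd'inj hc)
          simp [h, this]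
      rw [this, Matrix.det_permutation]
    have hR : Matrix.det (Matrix.of fun a b : Fin ((colS S t).card) =>
        stdVec (↑(C.orderIsoOfFin hCc b)) (enumK ⟨C, hCc⟩ a)) = 1 := by
      rw [← Matrix.det_submatrix_equiv_self e]
      have : ((Matrix.of fun a b : Fin ((colS S t).card) =>
          stdVec (↑(C.orderIsoOfFin hCc b)) (enumK ⟨C, hCc⟩ a)).submatrix e e)
          = (1 : Matrix (Fin (m+1)) (Fin (m+1)) ℂ) := by
        ext a a'
        simp only [Matrix.submatrix_apply, Matrix.of_apply]
        have h1 : enumK ⟨C, hCc⟩ (e a) = cf a := hcfe a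
        have h2 : (↑(C.orderIsoOfFin hCc (e a')) : Fin n) = cf a' := hcfe a'
        rw [h1, h2]
        simp only [stdVec, Pi.single_apply, Matrix.one_apply]
        by_cases h : a = a'
        · simp [h]
        · have hne : cf a ≠ cf a' := fun hc => h ((C.orderEmbOfFin hCcard).injective hc)
          simp [h, hne]
      rw [this, Matrix.det_one]
    rw [hL, hR, mul_one] at hev
    exact hev
  -- image of cE is E
  have himg : Finset.image cE Finset.univ = E := by
    apply Finset.coe_injective
    rw [Finset.coe_image, Finset.coe_univ, Set.image_univ]
    simp [hcE]
  have hprod : ∏ a : Fin m, b (cE a) (cE a) = ∏ i ∈ E, b i i := by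
    rw [← himg, Finset.prod_image (fun x _ y _ h => hcEmono.injective h)]
  -- the matrix T
  set T : Matrix (Fin (m+1)) (Fin (m+1)) ℂ := Matrix.of (fun a a' => b (d' a) (g a')) with hT
  have hTdet : T.det = b s t * ∏ i ∈ E, b i i := by
    rw [detAux T]
    · have hc1 : T (Fin.last m) (Fin.last m) = b s t := by
        simp only [hT, Matrix.of_apply, hd', hg, Fin.snoc_last]
      rw [hc1, ← hprod]
      congr 1
      apply Finset.prod_congr rfl
      intro a _
      simp only [hT, Matrix.of_apply, hd', hg, Fin.snoc_castSucc]
    · intro a c hac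
      simp only [hT, Matrix.of_apply, hd', hg, Fin.snoc_castSucc]
      exact hut _ _ (hcEmono hac)
    · intro a
      simp only [hT, Matrix.of_apply, hd', hg, Fin.snoc_castSucc, Fin.snoc_last]
      exact hz _ _ (hEsub _ (hcEmem a)) (hEne _ (hcEmem a))
  -- main computation
  simp only [colWedge, wedgeFam, stdVec, Matrix.mulVec_single_one, Matrix.col, Matrix.transpose_apply, mul_one]
  rw [← Matrix.det_submatrix_equiv_self e]
  have hsub : ((Matrix.of fun a a' : Fin ((colS S t).card) =>
      b (enumK ⟨C, hCc⟩ a) (↑((colS S t).orderIsoOfFin rfl a'))).submatrix e e)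
      = T.submatrix π id := by
    ext a a'
    simp only [Matrix.submatrix_apply, Matrix.of_apply, hT, id]
    have h1 : enumK ⟨C, hCc⟩ (e a) = cf a := hcfe a
    have h2 : (↑((colS S t).orderIsoOfFin rfl (e a')) : Fin n) = g a' := hge a'
    have h3 : d' (π a) = cf a := hπspec a
    rw [h1, h2, h3]
  rw [hsub, Matrix.det_permute, hTdet, hsign]
  ring


end
end

section
/- Let S be a closed set of pairs and let b ∈ SL_n(ℂ) be upper triangular. Then there exist c ∈ U_S and an upper triangular matrix d ∈ SL_n(ℂ) with d_{ij} = 0 for every pair i ≠ j with i ∈ S_j, such that b = c·d. -/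
open Matrix Filter Topology

noncomputable section

/-- Entries of a transvection matrix. -/
lemma trans_apply8 {n : ℕ} (i j : Fin n) (c : ℂ) (a b : Fin n) :
    Matrix.transvection i j c a b =
      (if a = b then (1:ℂ) else 0) + (if i = a ∧ j = b then c else 0) := by
  simp [Matrix.transvection, Matrix.add_apply, Matrix.one_apply, Matrix.single,
    Matrix.of_apply]

/-- `U_S` is closed under multiplication. -/
lemma USet_mul8 {n : ℕ} {S : Finset (Fin n × Fin n)} (hS : PairsClosed S)
    {u v : Matrix.SpecialLinearGroup (Fin n) ℂ} (hu : u ∈ USet S) (hv : v ∈ USet S) :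
    u * v ∈ USet S := by
  obtain ⟨hu1, hu2, hu3⟩ := hu
  obtain ⟨hv1, hv2, hv3⟩ := hv
  have key : ∀ i j : Fin n, ((u * v : Matrix.SpecialLinearGroup (Fin n) ℂ)).val i j
      = ∑ k, u.val i k * v.val k j := by
    intro i j
    rw [Matrix.SpecialLinearGroup.coe_mul, Matrix.mul_apply]
  refine ⟨?_, ?_, ?_⟩
  · intro i j hij
    rw [key]
    refine Finset.sum_eq_zero fun k _ => ?_
    rcases lt_trichotomy k i with h | h | h
    · rw [hu1 i k h, zero_mul]
    · subst h
      rw [hv1 k j hij, mul_zero]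
    · -- i < k, need v k j = 0 since j < i < k
      rw [hv1 k j (hij.trans h), mul_zero]
  · intro i
    rw [key]
    rw [Finset.sum_eq_single i]
    · rw [hu2, hv2, one_mul]
    · intro k _ hk
      rcases lt_trichotomy k i with h | h | h
      · rw [hu1 i k h, zero_mul]
      · exact absurd h hk
      · rw [hv1 k i h, mul_zero]
    · intro h; exact absurd (Finset.mem_univ i) h
  · intro i j hij hnot
    rw [key]
    refine Finset.sum_eq_zero fun k _ => ?_
    by_cases hik : i = k
    · subst hik
      rw [hv3 i j hij hnot, mul_zero]
    · by_cases hkj : k = j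
      · subst hkj
        rw [hu3 i k hij hnot, zero_mul]
      · rcases lt_trichotomy i k with h | h | h
        · by_cases hikS : (i, k) ∈ S
          · rcases lt_trichotomy k j with h2 | h2 | h2
            · by_cases hkjS : (k, j) ∈ S
              · exact absurd (hS.2 i k j hikS hkjS) hnot
              · rw [hv3 k j h2 hkjS, mul_zero]
            · exact absurd h2 hkj
            · rw [hv1 k j h2, mul_zero]
          · rw [hu3 i k h hikS, zero_mul]
        · exact absurd h hik
        · rw [hu1 i k h, zero_mul]

/-- A transvection at a position in `S` belongs to `U_S`. -/
lemma transvection_mem_USet8 {n : ℕ} {S : Finset (Fin n × Fin n)} {i j : Fin n}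
    (hij : i < j) (hmem : (i, j) ∈ S) (c : ℂ) :
    (⟨Matrix.transvection i j c, Matrix.det_transvection_of_ne i j hij.ne c⟩ :
      Matrix.SpecialLinearGroup (Fin n) ℂ) ∈ USet S := by
  refine ⟨?_, ?_, ?_⟩
  · intro a b hba
    show Matrix.transvection i j c a b = 0
    rw [trans_apply8]
    rw [if_neg (by rintro rfl; exact lt_irrefl _ hba), if_neg ?_, add_zero]
    rintro ⟨rfl, rfl⟩
    exact absurd hij (not_lt_of_gt hba)
  · intro a
    show Matrix.transvection i j c a a = 1
    rw [trans_apply8, if_pos rfl, if_neg ?_, add_zero]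
    rintro ⟨rfl, rfl⟩
    exact lt_irrefl _ hij
  · intro a b hab hnot
    show Matrix.transvection i j c a b = 0
    rw [trans_apply8, if_neg hab.ne, if_neg ?_, add_zero]
    rintro ⟨rfl, rfl⟩
    exact hnot hmem

/-- Diagonal entries of an upper triangular special linear matrix are nonzero. -/
lemma diag_ne_zero8 {n : ℕ} (b : Matrix.SpecialLinearGroup (Fin n) ℂ)
    (hb : ∀ i j : Fin n, j < i → b.val i j = 0) (j : Fin n) : b.val j j ≠ 0 := by
  intro h
  have hBT : b.val.BlockTriangular id := fun i k hik => hb i k hik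
  have hdet : b.val.det = 1 := b.2
  rw [Matrix.det_of_upperTriangular hBT] at hdet
  have : (∏ i, b.val i i) = 0 := Finset.prod_eq_zero (Finset.mem_univ j) h
  rw [hdet] at this
  exact one_ne_zero this

open scoped Classical in
/-- The weighted count of nonzero entries of `b` at positions in `S`. -/
def Phi8 {n : ℕ} (S : Finset (Fin n × Fin n)) (b : Matrix (Fin n) (Fin n) ℂ) : ℕ :=
  ∑ p ∈ S, if b p.1 p.2 = 0 then 0 else (n * n + 1) ^ (n - 1 - p.2.val)

/-- The trivial case: if all `S`-entries of `b` vanish, take `c = 1`, `d = b`. -/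
lemma done_case8 {n : ℕ} (S : Finset (Fin n × Fin n))
    (b : Matrix.SpecialLinearGroup (Fin n) ℂ)
    (hb : ∀ i j : Fin n, j < i → b.val i j = 0)
    (hT : ∀ p ∈ S, b.val p.1 p.2 = 0) :
    ∃ c d : Matrix.SpecialLinearGroup (Fin n) ℂ,
      c ∈ USet S ∧
      (∀ i j : Fin n, j < i → d.val i j = 0) ∧
      (∀ i j : Fin n, i < j → (i, j) ∈ S → d.val i j = 0) ∧
      b = c * d := by
  refine ⟨1, b, ⟨?_, ?_, ?_⟩, hb, fun i j _ hij => hT (i, j) hij, (one_mul b).symm⟩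
  · intro i j hij
    rw [Matrix.SpecialLinearGroup.coe_one, Matrix.one_apply_ne hij.ne']
  · intro i
    rw [Matrix.SpecialLinearGroup.coe_one, Matrix.one_apply_eq]
  · intro i j hij _
    rw [Matrix.SpecialLinearGroup.coe_one, Matrix.one_apply_ne hij.ne]

/-- The core induction. -/
lemma key8 {n : ℕ} (S : Finset (Fin n × Fin n)) (hS : PairsClosed S) :
    ∀ N : ℕ, ∀ b : Matrix.SpecialLinearGroup (Fin n) ℂ,
      (∀ i j : Fin n, j < i → b.val i j = 0) → Phi8 S b.val ≤ N →
      ∃ c d : Matrix.SpecialLinearGroup (Fin n) ℂ,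
        c ∈ USet S ∧
        (∀ i j : Fin n, j < i → d.val i j = 0) ∧
        (∀ i j : Fin n, i < j → (i, j) ∈ S → d.val i j = 0) ∧
        b = c * d := by
  classical
  intro N
  induction N with
  | zero =>
    intro b hb hΦ
    have h0 : Phi8 S b.val = 0 := Nat.le_zero.mp hΦ
    rw [Phi8, Finset.sum_eq_zero_iff] at h0
    refine done_case8 S b hb fun p hp => ?_
    by_contra hne
    have hz := h0 p hp
    rw [if_neg hne] at hz
    exact absurd hz (Nat.pow_pos (Nat.succ_pos _)).ne'
  | succ N ih =>
    intro b hb hΦ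
    by_cases hT : ∀ p ∈ S, b.val p.1 p.2 = 0
    · exact done_case8 S b hb hT
    · push_neg at hT
      obtain ⟨⟨i, j⟩, hpS, hp0⟩ := hT
      have hij : i < j := hS.1 (i, j) hpS
      have hjj : b.val j j ≠ 0 := diag_ne_zero8 b hb j
      set t : ℂ := -(b.val i j) / (b.val j j) with ht
      set E : Matrix.SpecialLinearGroup (Fin n) ℂ :=
        ⟨Matrix.transvection i j t, Matrix.det_transvection_of_ne i j hij.ne t⟩ with hE
      set Einv : Matrix.SpecialLinearGroup (Fin n) ℂ :=
        ⟨Matrix.transvection i j (-t), Matrix.det_transvection_of_ne i j hij.ne (-t)⟩ with hEinv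
      have hEinvE : Einv * E = 1 := by
        apply Subtype.ext
        show Einv.val * E.val = 1
        rw [hEinv, hE]
        show Matrix.transvection i j (-t) * Matrix.transvection i j t = 1
        rw [Matrix.transvection_mul_transvection_same i j hij.ne, neg_add_cancel,
          Matrix.transvection_zero]
      set b' : Matrix.SpecialLinearGroup (Fin n) ℂ := E * b with hb'def
      have hb'val : b'.val = Matrix.transvection i j t * b.val := rfl
      -- entries of b'
      have hrow_ne : ∀ a k : Fin n, a ≠ i → b'.val a k = b.val a k := by
        intro a k ha
        rw [hb'val, Matrix.transvection_mul_apply_of_ne i j a k ha]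
      have hrow_i : ∀ k : Fin n, b'.val i k = b.val i k + t * b.val j k := by
        intro k
        rw [hb'val, Matrix.transvection_mul_apply_same i j k]
      have hb'ij : b'.val i j = 0 := by
        rw [hrow_i, ht, div_mul_cancel₀ _ hjj]
        ring
      -- b' is upper triangular
      have hb' : ∀ a k : Fin n, k < a → b'.val a k = 0 := by
        intro a k hka
        by_cases ha : a = i
        · subst ha
          rw [hrow_i, hb a k hka, hb j k (hka.trans hij), mul_zero, add_zero]
        · rw [hrow_ne a k ha, hb a k hka]
      -- b' agrees with b on columns ≤ j except at (i,j)
      have hagree : ∀ q : Fin n × Fin n, q ≠ (i, j) → q.2.val ≤ j.val →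
          b'.val q.1 q.2 = b.val q.1 q.2 := by
        rintro ⟨a, k⟩ hq hk
        by_cases ha : a = i
        · subst ha
          have hkj : k ≠ j := by
            rintro rfl; exact hq rfl
          have hklt : k < j := lt_of_le_of_ne (Fin.le_def.mpr hk) hkj
          rw [hrow_i, hb j k hklt, mul_zero, add_zero]
        · exact hrow_ne a k ha
      -- measure decreases
      have hdec : Phi8 S b'.val < Phi8 S b.val := by
        classical
        set f : Fin n × Fin n → ℕ :=
          fun p => if b.val p.1 p.2 = 0 then 0 else (n * n + 1) ^ (n - 1 - p.2.val) with hf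
        set f' : Fin n × Fin n → ℕ :=
          fun p => if b'.val p.1 p.2 = 0 then 0 else (n * n + 1) ^ (n - 1 - p.2.val) with hf'
        have hPhib : Phi8 S b.val = ∑ p ∈ S, f p := rfl
        have hPhib' : Phi8 S b'.val = ∑ p ∈ S, f' p := rfl
        set s : Finset (Fin n × Fin n) := S.filter (fun q => q.2.val ≤ j.val) with hs
        have hsplit : ∀ g : Fin n × Fin n → ℕ,
            ∑ p ∈ S, g p = ∑ p ∈ s, g p + ∑ p ∈ S.filter (fun q => ¬ q.2.val ≤ j.val), g p := by
          intro g
          rw [hs, Finset.sum_filter_add_sum_filter_not]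
        have hijs : (i, j) ∈ s := by
          rw [hs, Finset.mem_filter]
          exact ⟨hpS, le_rfl⟩
        have herase' : ∀ q ∈ s.erase (i, j), f' q = f q := by
          intro q hq
          obtain ⟨hq1, hq2⟩ := Finset.mem_erase.mp hq
          rw [hs, Finset.mem_filter] at hq2
          simp only [hf, hf', hagree q hq1 hq2.2]
        have hf'ij : f' (i, j) = 0 := by simp [hf', hb'ij]
        have hfij : f (i, j) = (n * n + 1) ^ (n - 1 - j.val) := by
          have : b.val i j ≠ 0 := hp0
          simp [hf, this]
        have hsum_s' : ∑ p ∈ s, f' p = ∑ p ∈ s.erase (i, j), f p := by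
          rw [← Finset.sum_erase_add s f' hijs, hf'ij, add_zero]
          exact Finset.sum_congr rfl herase'
        have hsum_s : ∑ p ∈ s, f p
            = ∑ p ∈ s.erase (i, j), f p + (n * n + 1) ^ (n - 1 - j.val) := by
          rw [← Finset.sum_erase_add s f hijs, hfij]
        have hwpos : 0 < (n * n + 1) ^ (n - 1 - j.val) := Nat.pow_pos (Nat.succ_pos _)
        -- bound on the tail
        have htail : ∑ p ∈ S.filter (fun q => ¬ q.2.val ≤ j.val), f' p + 1
            ≤ (n * n + 1) ^ (n - 1 - j.val) := by
          rcases Finset.eq_empty_or_nonempty (S.filter (fun q => ¬ q.2.val ≤ j.val)) with he | hne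
          · rw [he, Finset.sum_empty]
            omega
          · obtain ⟨q0, hq0⟩ := hne
            rw [Finset.mem_filter] at hq0
            have hq0n : q0.2.val < n := q0.2.isLt
            have hjn : j.val + 2 ≤ n := by omega
            set M : ℕ := (n * n + 1) ^ (n - 2 - j.val) with hM
            have hbound : ∀ p ∈ S.filter (fun q => ¬ q.2.val ≤ j.val), f' p ≤ M := by
              intro p hp
              rw [Finset.mem_filter] at hp
              have h1 : f' p ≤ (n * n + 1) ^ (n - 1 - p.2.val) := by
                by_cases h : b'.val p.1 p.2 = 0 <;> simp [hf', h]
              have h2 : (n * n + 1) ^ (n - 1 - p.2.val) ≤ M := by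
                rw [hM]
                exact Nat.pow_le_pow_right (by omega) (by omega)
              omega
            have hcard : (S.filter (fun q => ¬ q.2.val ≤ j.val)).card ≤ n * n := by
              calc (S.filter (fun q => ¬ q.2.val ≤ j.val)).card
                  ≤ S.card := Finset.card_filter_le _ _
                _ ≤ (Finset.univ : Finset (Fin n × Fin n)).card := Finset.card_le_univ _
                _ = n * n := by simp [Fintype.card_prod]
            have hsum_le : ∑ p ∈ S.filter (fun q => ¬ q.2.val ≤ j.val), f' p
                ≤ (S.filter (fun q => ¬ q.2.val ≤ j.val)).card * M := by
              calc ∑ p ∈ S.filter (fun q => ¬ q.2.val ≤ j.val), f' p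
                  ≤ ∑ _p ∈ S.filter (fun q => ¬ q.2.val ≤ j.val), M :=
                    Finset.sum_le_sum hbound
                _ = _ := by rw [Finset.sum_const, smul_eq_mul]
            have hMpos : 1 ≤ M := Nat.pow_pos (Nat.succ_pos _)
            have hexp : n - 1 - j.val = (n - 2 - j.val) + 1 := by omega
            have hw : (n * n + 1) ^ (n - 1 - j.val) = M * (n * n + 1) := by
              rw [hexp, pow_succ, hM]
            have : (S.filter (fun q => ¬ q.2.val ≤ j.val)).card * M ≤ n * n * M :=
              Nat.mul_le_mul_right _ hcard
            nlinarith [hsum_le, hMpos, hw, this]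
        rw [hPhib, hPhib', hsplit f, hsplit f']
        have hsum_tail_f : 0 ≤ ∑ p ∈ S.filter (fun q => ¬ q.2.val ≤ j.val), f p :=
          Nat.zero_le _
        omega
      have hΦ' : Phi8 S b'.val ≤ N := by omega
      obtain ⟨c', d, hc', hd1, hd2, hfac⟩ := ih b' hb' hΦ'
      refine ⟨Einv * c', d, USet_mul8 hS (transvection_mem_USet8 hij hpS (-t)) hc', hd1, hd2, ?_⟩
      have : b = Einv * b' := by
        rw [hb'def, ← mul_assoc, hEinvE, one_mul]
      rw [this, hfac, mul_assoc]

/-- Let `S` be a closed set of pairs and `b ∈ SL_n(ℂ)` upper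
triangular. Then there exist `c ∈ U_S` and an upper triangular `d ∈ SL_n(ℂ)` with
`d_{ij} = 0` for every pair `i ≠ j` with `i ∈ S_j`, such that `b = c·d`. -/
theorem stmt8 {n : ℕ} (hn : 1 ≤ n) (S : Finset (Fin n × Fin n)) (hS : PairsClosed S)
    (b : Matrix.SpecialLinearGroup (Fin n) ℂ)
    (hb : ∀ i j : Fin n, j < i → b.val i j = 0) :
    ∃ c d : Matrix.SpecialLinearGroup (Fin n) ℂ,
      c ∈ USet S ∧
      (∀ i j : Fin n, j < i → d.val i j = 0) ∧
      (∀ i j : Fin n, i ≠ j → i ∈ colS S j → d.val i j = 0) ∧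
      b = c * d := by
  obtain ⟨c, d, hc, hd1, hd2, hfac⟩ := key8 S hS (Phi8 S b.val) b hb le_rfl
  refine ⟨c, d, hc, hd1, ?_, hfac⟩
  intro i j hij hmem
  rw [colS, Finset.mem_insert] at hmem
  rcases hmem with h | h
  · exact absurd h hij
  · rw [Finset.mem_image] at h
    obtain ⟨q, hq, hq1⟩ := h
    rw [Finset.mem_filter] at hq
    have hqS : (i, j) ∈ S := by
      have : q = (i, j) := Prod.ext hq1 hq.2
      rw [← this]; exact hq.1
    exact hd2 i j (hS.1 (i, j) hqS) hqS

end
end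

section
/- Let S be a closed set of pairs and let α = (α_1,…,α_n) ∈ (ℤ_{>0})^n satisfy α_i > 2iα_{i−1} + 2 for i = 2,…,n. Let (b^{(m)})_{m∈ℕ} be a sequence of upper triangular matrices in SL_n(ℂ) with b^{(m)}_{ij} = 0 for all pairs i ≠ j with i ∈ S_j. Assume: (a) for each i ∈ {1,…,n}, the sequence m ↦ b^{(m)}_{11}·b^{(m)}_{22}⋯b^{(m)}_{ii} converges in ℂ; (b) there exists s ∈ {1,…,n} with lim_{m→∞} b^{(m)}_{ss} = 0; (c) setting 𝒞_m := (b^{(m)}_{11})^n (b^{(m)}_{22})^{n−1} ⋯ (b^{(m)}_{nn})^1, for each j ∈ {1,…,n} the limit q_j^∞ := lim_{m→∞} 𝒞_m^{α_j} · ⋀_{i∈S_j}(b^{(m)} e_i) exists in Λ^{|S_j|}ℂ^n. Then for every t ∈ {1,…,n} with q_t^∞ ≠ 0, the vector q_t^∞ lies in the subspace Λ^{|S_t|}(span_ℂ(e_1,…,e_{t−1})) of Λ^{|S_t|}ℂ^n; equivalently, the coordinate of q_t^∞ on every standard basis wedge ⋀_{i∈C} e_i with C ⊆ {1,…,n}, |C|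 = |S_t|, containing an index ≥ t is zero. -/
open Matrix Filter Topology

noncomputable section

-- === auxiliary lemmas ===
def Complex.abs : AbsoluteValue ℂ ℝ := NormedField.toAbsoluteValue ℂ

lemma Complex.norm_eq_abs (z : ℂ) : ‖z‖ = Complex.abs z := rfl

lemma Complex.continuous_abs : Continuous Complex.abs := by
  exact continuous_norm

namespace Stmt15Aux

lemma abs_smul_sign {k : ℕ} (σ : Equiv.Perm (Fin k)) (z : ℂ) :
    Complex.abs (Equiv.Perm.sign σ • z) = Complex.abs z := by
  rcases Int.units_eq_one_or (Equiv.Perm.sign σ) with h1 | h1 <;> simp [h1]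

lemma abs_det_le {k : ℕ} (M : Matrix (Fin k) (Fin k) ℂ) (g : Fin k → ℝ)
    (h : ∀ x y, Complex.abs (M x y) ≤ g y) :
    Complex.abs M.det ≤ (Nat.factorial k : ℝ) * ∏ y, g y := by
  rw [Matrix.det_apply]
  calc Complex.abs (∑ σ : Equiv.Perm (Fin k), Equiv.Perm.sign σ • ∏ y, M (σ y) y)
      ≤ ∑ σ : Equiv.Perm (Fin k), Complex.abs (Equiv.Perm.sign σ • ∏ y, M (σ y) y) :=
        Complex.abs.sum_le _ _
    _ ≤ ∑ _σ : Equiv.Perm (Fin k), ∏ y, g y := by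
        refine Finset.sum_le_sum fun σ _ => ?_
        rw [abs_smul_sign, map_prod]
        exact Finset.prod_le_prod (fun y _ => Complex.abs.nonneg _) (fun y _ => h _ y)
    _ = (Nat.factorial k : ℝ) * ∏ y, g y := by
        rw [Finset.sum_const, Finset.card_univ, Fintype.card_perm, Fintype.card_fin,
          nsmul_eq_mul]

/-- weighted determinant bound -/
lemma abs_det_le_mul {k : ℕ} (M : Matrix (Fin k) (Fin k) ℂ) (c : ℝ) (hc : 0 < c)
    (w : Fin k → ℕ) (Q : ℝ) (h : ∀ x y, c ^ (w y) * Complex.abs (M x y) ≤ Q) :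
    c ^ (∑ y, w y) * Complex.abs M.det ≤ (Nat.factorial k : ℝ) * Q ^ k := by
  have h' : ∀ x y, Complex.abs (M x y) ≤ Q / c ^ (w y) := by
    intro x y
    rw [le_div_iff₀ (pow_pos hc _)]
    calc Complex.abs (M x y) * c ^ w y = c ^ w y * Complex.abs (M x y) := by ring
      _ ≤ Q := h x y
  have h2 := abs_det_le M (fun y => Q / c ^ (w y)) h'
  have h3 : ∏ y, (Q / c ^ (w y)) = Q ^ k / c ^ (∑ y, w y) := by
    rw [Finset.prod_div_distrib, Finset.prod_const, Finset.card_univ, Fintype.card_fin,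
      Finset.prod_pow_eq_pow_sum]
  have h4 : c ^ (∑ y, w y) * Complex.abs M.det ≤
      c ^ (∑ y, w y) * ((Nat.factorial k : ℝ) * (Q ^ k / c ^ (∑ y, w y))) := by
    rw [← h3]
    exact mul_le_mul_of_nonneg_left h2 (pow_pos hc _).le
  calc c ^ (∑ y, w y) * Complex.abs M.det
      ≤ c ^ (∑ y, w y) * ((Nat.factorial k : ℝ) * (Q ^ k / c ^ (∑ y, w y))) := h4
    _ = (Nat.factorial k : ℝ) * Q ^ k := by
        field_simp

lemma det_triangular_enum {n k : ℕ} (g : Matrix (Fin n) (Fin n) ℂ)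
    (hg : ∀ i j : Fin n, j < i → g i j = 0) (f : Fin k → Fin n) (hf : StrictMono f) :
    (Matrix.of fun x y : Fin k => g (f x) (f y)).det = ∏ x, g (f x) (f x) := by
  have hb : (Matrix.of fun x y : Fin k => g (f x) (f y)).BlockTriangular id := by
    intro x y hxy
    exact hg _ _ (hf hxy)
  simpa using Matrix.det_of_upperTriangular hb

lemma det_last_row {k : ℕ} (M : Matrix (Fin (k+1)) (Fin (k+1)) ℂ)
    (h : ∀ y : Fin k, M (Fin.last k) (Fin.castSucc y) = 0) :
    M.det = M (Fin.last k) (Fin.last k) * (M.submatrix Fin.castSucc Fin.castSucc).det := by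
  rw [Matrix.det_succ_row M (Fin.last k), Finset.sum_eq_single (Fin.last k)]
  · rw [Fin.succAbove_last]
    have h1 : ((-1 : ℂ)) ^ ((Fin.last k : ℕ) + (Fin.last k : ℕ)) = 1 := by
      rw [Fin.val_last, ← two_mul, pow_mul]
      norm_num
    rw [h1, one_mul]
  · intro y _ hy
    obtain ⟨y', rfl⟩ := Fin.exists_castSucc_eq.2 hy
    rw [h y']
    ring
  · intro hmem
    exact absurd (Finset.mem_univ _) hmem

lemma abs_det_col_single {k : ℕ} (M : Matrix (Fin (k+1)) (Fin (k+1)) ℂ) (x₀ : Fin (k+1))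
    (h : ∀ x, x ≠ x₀ → M x (Fin.last k) = 0) :
    Complex.abs M.det =
      Complex.abs (M x₀ (Fin.last k)) *
        Complex.abs ((M.submatrix x₀.succAbove Fin.castSucc).det) := by
  rw [Matrix.det_succ_column M (Fin.last k), Finset.sum_eq_single x₀]
  · rw [Fin.succAbove_last, _root_.map_mul, _root_.map_mul, map_pow]
    simp
  · intro x _ hx
    rw [h x hx]
    ring
  · intro hmem
    exact absurd (Finset.mem_univ _) hmem

end Stmt15Aux

/-- Let `S` be closed and `α ∈ (ℤ_{>0})^n` with
`α_i > 2iα_{i−1} + 2` for `i = 2,…,n` (in `0`-based terms: `α_i > 2(i+1)α_j + 2`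
whenever `j+1 = i`). Let `(b^{(m)})` be a sequence of upper triangular matrices in
`SL_n(ℂ)` with `b^{(m)}_{ij} = 0` for `i ∈ S_j`, `i ≠ j`; assume each partial diagonal
product converges, some diagonal entry tends to `0`, and for each `j` the limit
`q_j^∞ = lim_m 𝒞_m^{α_j} · ⋀_{i∈S_j}(b^{(m)} e_i)` exists, where
`𝒞_m = (b^{(m)}_{11})^n ⋯ (b^{(m)}_{nn})^1`. Then, for every `t` with `q_t^∞ ≠ 0`,
`q_t^∞ ∈ Λ^{|S_t|}(span(e_1,…,e_{t−1}))`: the coordinate of `q_t^∞` on every standard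
basis wedge `⋀_{i∈C} e_i` with `C` containing an index `≥ t` vanishes. -/
theorem stmt15 {n : ℕ} (hn : 1 ≤ n) (S : Finset (Fin n × Fin n)) (hS : PairsClosed S)
    (α : Fin n → ℕ) (hαpos : ∀ i, 0 < α i)
    (hα : ∀ i j : Fin n, (j : ℕ) + 1 = (i : ℕ) → 2 * ((i : ℕ) + 1) * α j + 2 < α i)
    (b : ℕ → Matrix (Fin n) (Fin n) ℂ)
    (hdet : ∀ m, (b m).det = 1)
    (hut : ∀ m (i j : Fin n), j < i → b m i j = 0)
    (hz : ∀ m (i j : Fin n), i ∈ colS S j → i ≠ j → b m i j = 0)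
    (hconv : ∀ i : Fin n, ∃ L : ℂ,
      Tendsto (fun m => ∏ k ∈ Finset.Iic i, b m k k) atTop (𝓝 L))
    (s : Fin n) (hs : Tendsto (fun m => b m s s) atTop (𝓝 0))
    (C : ℕ → ℂ) (hC : ∀ m, C m = ∏ i : Fin n, (b m i i) ^ (n - (i : ℕ)))
    (q : (j : Fin n) → ExtP n (colS S j).card)
    (hq : ∀ j : Fin n,
      Tendsto (fun m => (C m) ^ (α j) • colWedge (colS S j).card (b m) (colS S j) rfl)
        atTop (𝓝 (q j))) :
    ∀ t : Fin n, q t ≠ 0 →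
      ∀ (D : Finset (Fin n)) (hD : D.card = (colS S t).card),
        (∃ i ∈ D, t ≤ i) → q t ⟨D, hD⟩ = 0 := by

  classical
  intro t hqt D hD hDt
  -- basic structure facts about colS
  have hSlt : ∀ (j x : Fin n), x ∈ colS S j → x ≠ j → x < j := by
    intro j x hx hne
    rcases Finset.mem_insert.mp hx with h | h
    · exact absurd h hne
    · obtain ⟨p, hp, rfl⟩ := Finset.mem_image.mp h
      have h2 := (Finset.mem_filter.mp hp).2
      have h1 := hS.1 p (Finset.mem_filter.mp hp).1
      rwa [h2] at h1
  have hSle : ∀ (j x : Fin n), x ∈ colS S j → x ≤ j := by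
    intro j x hx
    rcases eq_or_ne x j with rfl | hne
    · exact le_refl _
    · exact (hSlt j x hx hne).le
  have hjS : ∀ j : Fin n, j ∈ colS S j := fun j => Finset.mem_insert_self _ _
  -- α arithmetic
  have hαstep : ∀ i j : Fin n, (j : ℕ) + 1 = (i : ℕ) → α j < α i := by
    intro i j h
    have h1 := hα i j h
    have h2 : α j ≤ 2 * ((i : ℕ) + 1) * α j := Nat.le_mul_of_pos_left _ (by positivity)
    omega
  have hαmono : ∀ i j : Fin n, i ≤ j → α i ≤ α j := by
    have key : ∀ (d : ℕ) (i j : Fin n), (i : ℕ) + d = (j : ℕ) → α i ≤ α j := by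
      intro d
      induction d with
      | zero =>
        intro i j h
        have : i = j := Fin.ext (by omega)
        rw [this]
      | succ d ih =>
        intro i j h
        have hlt : (i : ℕ) + d < n := by have := j.isLt; omega
        have h1 := ih i ⟨(i : ℕ) + d, hlt⟩ rfl
        have h2 := hαstep j ⟨(i : ℕ) + d, hlt⟩ (by simp only [Fin.val_mk]; omega)
        omega
    intro i j hij
    exact key ((j : ℕ) - (i : ℕ)) i j (by have := Fin.le_def.mp hij; omega)
  have hαlow : ∀ i : Fin n, (i : ℕ) + 1 ≤ α i := by
    have key : ∀ (v : ℕ) (i : Fin n), (i : ℕ) = v → (i : ℕ) + 1 ≤ α i := by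
      intro v
      induction v with
      | zero => intro i h; rw [h]; exact hαpos i
      | succ v ih =>
        intro i h
        have hlt : v < n := by have := i.isLt; omega
        have h1 := ih ⟨v, hlt⟩ rfl
        have h2 := hα i ⟨v, hlt⟩ (by simp only [Fin.val_mk]; omega)
        have h3 : α ⟨v, hlt⟩ ≤ 2 * ((i : ℕ) + 1) * α ⟨v, hlt⟩ :=
          Nat.le_mul_of_pos_left _ (by positivity)
        have hv : ((⟨v, hlt⟩ : Fin n) : ℕ) = v := rfl
        omega
    exact fun i => key (i : ℕ) i rfl
  -- diagonal facts
  have hdiag1 : ∀ m, ∏ i : Fin n, b m i i = 1 := by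
    intro m
    have hb : (b m).BlockTriangular id := fun i j hij => hut m i j hij
    have h := Matrix.det_of_upperTriangular hb
    rw [hdet m] at h
    exact h.symm
  have hane : ∀ m (i : Fin n), b m i i ≠ 0 := by
    intro m i h0
    have h1 := hdiag1 m
    have h2 : ∏ i : Fin n, b m i i = 0 := Finset.prod_eq_zero (Finset.mem_univ i) h0
    rw [h2] at h1
    exact zero_ne_one h1
  set P : ℕ → Fin n → ℂ := fun m j => ∏ k ∈ Finset.Iic j, b m k k with hPdef
  have hPne : ∀ m j, P m j ≠ 0 :=
    fun m j => Finset.prod_ne_zero_iff.mpr fun i _ => hane m i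
  have hP0 : ∀ m (i : Fin n), (i : ℕ) = 0 → P m i = b m i i := by
    intro m i h0
    have hIic : Finset.Iic i = {i} := by
      ext x
      simp only [Finset.mem_Iic, Finset.mem_singleton, Fin.le_def, Fin.ext_iff]
      omega
    rw [hPdef]
    simp [hIic]
  have hPsplit : ∀ m (i : Fin n) (h : 0 < (i : ℕ)),
      P m i = b m i i * P m ⟨(i : ℕ) - 1, lt_of_le_of_lt (Nat.sub_le _ _) i.isLt⟩ := by
    intro m i h
    have hins : Finset.Iic i =
        insert i (Finset.Iic (⟨(i : ℕ) - 1, lt_of_le_of_lt (Nat.sub_le _ _) i.isLt⟩ : Fin n)) := by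
      ext x
      simp only [Finset.mem_Iic, Finset.mem_insert, Fin.le_def, Fin.ext_iff]
      omega
    rw [hPdef]
    simp only
    rw [hins, Finset.prod_insert (by simp only [Finset.mem_Iic, Fin.le_def]; omega)]
  -- limits
  obtain ⟨L, hL⟩ : ∃ L : Fin n → ℂ, ∀ i, Tendsto (fun m => P m i) atTop (𝓝 (L i)) := by
    choose L hL using hconv
    exact ⟨L, hL⟩
  have hCP : ∀ m, C m = ∏ j : Fin n, P m j := by
    intro m
    rw [hC m, hPdef]
    have h1 : (∏ j : Fin n, ∏ k ∈ Finset.Iic j, b m k k) =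
        ∏ k : Fin n, ∏ j ∈ Finset.Ici k, b m k k := by
      exact Finset.prod_comm' (by
        intro x y
        simp only [Finset.mem_univ, true_and, Finset.mem_Iic, Finset.mem_Ici, and_true])
    simp only
    rw [h1]
    refine (Finset.prod_congr rfl fun k _ => ?_).symm
    rw [Finset.prod_const, Fin.card_Ici]
  have hPs0 : Tendsto (fun m => P m s) atTop (𝓝 0) := by
    rcases Nat.eq_zero_or_pos (s : ℕ) with h0 | hpos
    · have heq : (fun m => P m s) = fun m => b m s s := funext fun m => hP0 m s h0
      rw [heq]; exact hs
    · have hfact : (fun m => P m s) = fun m =>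
          b m s s * P m ⟨(s : ℕ) - 1, lt_of_le_of_lt (Nat.sub_le _ _) s.isLt⟩ :=
        funext fun m => hPsplit m s hpos
      rw [hfact]
      have := hs.mul (hL ⟨(s : ℕ) - 1, lt_of_le_of_lt (Nat.sub_le _ _) s.isLt⟩)
      rwa [zero_mul] at this
  have hLs : L s = 0 := tendsto_nhds_unique (hL s) hPs0
  have hC0 : Tendsto (fun m => C m) atTop (𝓝 0) := by
    have h1 : Tendsto (fun m => ∏ j : Fin n, P m j) atTop (𝓝 (∏ j : Fin n, L j)) :=
      tendsto_finset_prod _ (fun j _ => hL j)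
    have h2 : (∏ j : Fin n, L j) = 0 := Finset.prod_eq_zero (Finset.mem_univ s) hLs
    rw [h2] at h1
    exact h1.congr (fun m => (hCP m).symm)
  set cm : ℕ → ℝ := fun m => Complex.abs (C m) with hcmdef
  have hcm0 : Tendsto cm atTop (𝓝 0) := by
    have h1 : Tendsto (fun m => Complex.abs (C m)) atTop (𝓝 (Complex.abs 0)) :=
      (Complex.continuous_abs.tendsto _).comp hC0
    simpa using h1
  have hCne : ∀ m, C m ≠ 0 := by
    intro m
    rw [hCP m]
    exact Finset.prod_ne_zero_iff.mpr fun j _ => hPne m j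
  have hcmpos : ∀ m, 0 < cm m := fun m => by
    simpa [hcmdef] using (Complex.abs.pos (hCne m))
  -- bound B
  have hBex : ∀ j : Fin n, ∃ Bj : ℝ, ∀ m, Complex.abs (P m j) ≤ Bj := by
    intro j
    obtain ⟨Bj, hBj⟩ := ((Complex.continuous_abs.tendsto (L j)).comp (hL j)).bddAbove_range
    exact ⟨Bj, fun m => hBj (Set.mem_range_self m)⟩
  choose B0 hB0 using hBex
  set B : ℝ := 1 + ∑ j : Fin n, B0 j with hBdef
  have hB0nn : ∀ j, 0 ≤ B0 j := fun j => le_trans (Complex.abs.nonneg _) (hB0 j 0)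
  have hB1 : (1 : ℝ) ≤ B := by
    have := Finset.sum_nonneg (fun j (_ : j ∈ Finset.univ) => hB0nn j)
    rw [hBdef]; linarith
  have hBpos : (0 : ℝ) < B := lt_of_lt_of_le one_pos hB1
  have hBP : ∀ m j, Complex.abs (P m j) ≤ B := by
    intro m j
    have h1 : B0 j ≤ ∑ j' : Fin n, B0 j' :=
      Finset.single_le_sum (fun j' _ => hB0nn j') (Finset.mem_univ j)
    have := hB0 j m
    rw [hBdef]; linarith
  -- coordinate formula
  have hcoord : ∀ (m : ℕ) (j : Fin n) (X : SubK n (colS S j).card) (k : ℕ)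
      (hk : (colS S j).card = k),
      colWedge (colS S j).card (b m) (colS S j) rfl X =
        (Matrix.of fun x y : Fin k =>
          b m (X.1.orderEmbOfFin (X.2.trans hk) x) ((colS S j).orderEmbOfFin hk y)).det := by
    intro m j X k hk
    subst hk
    obtain ⟨E, hE⟩ := X
    unfold colWedge wedgeFam enumK
    congr 1
    funext x y
    simp [stdVec, Finset.coe_orderIsoOfFin_apply]
  -- bound K for minors
  have hKex : ∀ j : Fin n, ∀ E : SubK n (colS S j).card, ∃ Kj : ℝ, ∀ m,
      Complex.abs ((C m ^ α j • colWedge (colS S j).card (b m) (colS S j) rfl) E) ≤ Kj := by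
    intro j E
    have h1 : Tendsto (fun m => (C m ^ α j • colWedge (colS S j).card (b m) (colS S j) rfl) E)
        atTop (𝓝 (q j E)) := (tendsto_pi_nhds.mp (hq j)) E
    obtain ⟨Kj, hKj⟩ := ((Complex.continuous_abs.tendsto _).comp h1).bddAbove_range
    exact ⟨Kj, fun m => hKj (Set.mem_range_self m)⟩
  choose K0 hK0 using hKex
  set K : ℝ := 1 + ∑ j : Fin n, ∑ E : SubK n (colS S j).card, K0 j E with hKdef
  have hK0nn : ∀ j E, 0 ≤ K0 j E := fun j E => le_trans (Complex.abs.nonneg _) (hK0 j E 0)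
  have hK1 : (1 : ℝ) ≤ K := by
    have h1 : (0:ℝ) ≤ ∑ j : Fin n, ∑ E : SubK n (colS S j).card, K0 j E :=
      Finset.sum_nonneg fun j _ => Finset.sum_nonneg fun E _ => hK0nn j E
    rw [hKdef]; linarith
  have hKb : ∀ (j : Fin n) (E : SubK n (colS S j).card) (m : ℕ),
      Complex.abs ((C m ^ α j • colWedge (colS S j).card (b m) (colS S j) rfl) E) ≤ K := by
    intro j E m
    have h1 : K0 j E ≤ ∑ E' : SubK n (colS S j).card, K0 j E' :=
      Finset.single_le_sum (fun E' _ => hK0nn j E') (Finset.mem_univ E)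
    have h2 : (∑ E' : SubK n (colS S j).card, K0 j E') ≤
        ∑ j' : Fin n, ∑ E' : SubK n (colS S j').card, K0 j' E' :=
      Finset.single_le_sum (f := fun j' => ∑ E' : SubK n (colS S j').card, K0 j' E')
        (fun j' _ => Finset.sum_nonneg fun E' _ => hK0nn j' E') (Finset.mem_univ j)
    have := hK0 j E m
    rw [hKdef]; linarith
  -- generalized minor bound
  have hminor : ∀ (j : Fin n) (k : ℕ) (hk : (colS S j).card = k)
      (E : Finset (Fin n)) (hE : E.card = k) (m : ℕ),
      cm m ^ α j * Complex.abs ((Matrix.of fun x y : Fin k =>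
        b m (E.orderEmbOfFin hE x) ((colS S j).orderEmbOfFin hk y)).det) ≤ K := by
    intro j k hk E hE m
    have h1 := hKb j ⟨E, hE.trans hk.symm⟩ m
    rw [Pi.smul_apply, smul_eq_mul, _root_.map_mul, map_pow,
      hcoord m j ⟨E, hE.trans hk.symm⟩ k hk] at h1
    exact h1
    -- uniform constants
  set Bn : ℝ := B ^ (n + 1) with hBndef
  have hBn1 : (1 : ℝ) ≤ Bn := one_le_pow₀ hB1
  have hBle : B ≤ Bn := by
    calc B = B ^ 1 := (pow_one B).symm
      _ ≤ B ^ (n + 1) := pow_le_pow_right₀ hB1 (by omega)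
  have hcmprod : ∀ m, cm m = ∏ j : Fin n, Complex.abs (P m j) := by
    intro m
    show Complex.abs (C m) = _
    rw [hCP m, map_prod]
  have hcmle : ∀ m (i : Fin n), cm m ≤ B ^ (n - 1) * Complex.abs (P m i) := by
    intro m i
    have h1 : cm m = Complex.abs (P m i) * ∏ j ∈ Finset.univ.erase i, Complex.abs (P m j) := by
      rw [hcmprod m, ← Finset.mul_prod_erase Finset.univ _ (Finset.mem_univ i)]
    have h2 : (∏ j ∈ Finset.univ.erase i, Complex.abs (P m j)) ≤ B ^ (n - 1) := by
      calc (∏ j ∈ Finset.univ.erase i, Complex.abs (P m j))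
          ≤ ∏ _j ∈ Finset.univ.erase i, B :=
            Finset.prod_le_prod (fun j _ => Complex.abs.nonneg _) (fun j _ => hBP m j)
        _ = B ^ (n - 1) := by
            rw [Finset.prod_const, Finset.card_erase_of_mem (Finset.mem_univ i),
              Finset.card_univ, Fintype.card_fin]
    rw [h1]
    calc Complex.abs (P m i) * ∏ j ∈ Finset.univ.erase i, Complex.abs (P m j)
        ≤ Complex.abs (P m i) * B ^ (n - 1) :=
          mul_le_mul_of_nonneg_left h2 (Complex.abs.nonneg _)
      _ = B ^ (n - 1) * Complex.abs (P m i) := mul_comm _ _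
  have hmulB : ∀ m, cm m ≤ 1 → ∀ i : Fin n, cm m * Complex.abs (b m i i) ≤ Bn := by
    intro m hc1 i
    rcases Nat.eq_zero_or_pos (i : ℕ) with h0 | hpos
    · have h1 : Complex.abs (b m i i) = Complex.abs (P m i) := by rw [hP0 m i h0]
      rw [h1]
      calc cm m * Complex.abs (P m i) ≤ 1 * B :=
          mul_le_mul hc1 (hBP m i) (Complex.abs.nonneg _) zero_le_one
        _ = B := one_mul B
        _ ≤ Bn := hBle
    · set i' : Fin n := ⟨(i : ℕ) - 1, lt_of_le_of_lt (Nat.sub_le _ _) i.isLt⟩ with hi'def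
      have h1 : Complex.abs (P m i) = Complex.abs (b m i i) * Complex.abs (P m i') := by
        rw [hPsplit m i hpos, _root_.map_mul]
      have hnn : (n - 1) + 1 = n := by omega
      calc cm m * Complex.abs (b m i i)
          ≤ (B ^ (n - 1) * Complex.abs (P m i')) * Complex.abs (b m i i) :=
            mul_le_mul_of_nonneg_right (hcmle m i') (Complex.abs.nonneg _)
        _ = B ^ (n - 1) * Complex.abs (P m i) := by rw [h1]; ring
        _ ≤ B ^ (n - 1) * B := mul_le_mul_of_nonneg_left (hBP m i) (by positivity)
        _ = B ^ ((n - 1) + 1) := (pow_succ B (n - 1)).symm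
        _ = B ^ n := by rw [hnn]
        _ ≤ Bn := pow_le_pow_right₀ hB1 (by omega)
  have hlowB : ∀ m (i : Fin n), cm m ≤ Bn * Complex.abs (b m i i) := by
    intro m i
    rcases Nat.eq_zero_or_pos (i : ℕ) with h0 | hpos
    · have h1 : Complex.abs (P m i) = Complex.abs (b m i i) := by rw [hP0 m i h0]
      calc cm m ≤ B ^ (n - 1) * Complex.abs (P m i) := hcmle m i
        _ = B ^ (n - 1) * Complex.abs (b m i i) := by rw [h1]
        _ ≤ Bn * Complex.abs (b m i i) :=
            mul_le_mul_of_nonneg_right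
              (le_trans (pow_le_pow_right₀ hB1 (by omega)) (le_refl Bn)) (Complex.abs.nonneg _)
    · set i' : Fin n := ⟨(i : ℕ) - 1, lt_of_le_of_lt (Nat.sub_le _ _) i.isLt⟩ with hi'def
      have h1 : Complex.abs (P m i) = Complex.abs (b m i i) * Complex.abs (P m i') := by
        rw [hPsplit m i hpos, _root_.map_mul]
      have hnn : (n - 1) + 1 = n := by omega
      calc cm m ≤ B ^ (n - 1) * Complex.abs (P m i) := hcmle m i
        _ = B ^ (n - 1) * (Complex.abs (b m i i) * Complex.abs (P m i')) := by rw [h1]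
        _ ≤ B ^ (n - 1) * (Complex.abs (b m i i) * B) := by
            refine mul_le_mul_of_nonneg_left
              (mul_le_mul_of_nonneg_left (hBP m i') (Complex.abs.nonneg _)) (by positivity)
        _ = B ^ ((n - 1) + 1) * Complex.abs (b m i i) := by
            rw [pow_succ]; ring
        _ = B ^ n * Complex.abs (b m i i) := by rw [hnn]
        _ ≤ Bn * Complex.abs (b m i i) :=
            mul_le_mul_of_nonneg_right (pow_le_pow_right₀ hB1 (by omega)) (Complex.abs.nonneg _)
  -- the key entry bound
  have hentry : ∀ m, cm m ≤ 1 → ∀ i j : Fin n,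
      cm m ^ (α j + (j : ℕ)) * Complex.abs (b m i j) ≤ K * Bn ^ n := by
    intro m hc1 i j
    have hQ1 : (1 : ℝ) ≤ K * Bn ^ n := by
      have h1 : (1 : ℝ) ≤ Bn ^ n := one_le_pow₀ hBn1
      nlinarith
    rcases lt_trichotomy j i with hji | heq | hij
    · rw [hut m i j hji]
      simp only [map_zero, mul_zero]
      linarith
    · subst heq
      have h1 : cm m ^ (α j + (j : ℕ)) ≤ cm m := by
        calc cm m ^ (α j + (j : ℕ)) ≤ cm m ^ 1 :=
            pow_le_pow_of_le_one (hcmpos m).le hc1 (by have := hαpos j; omega)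
          _ = cm m := pow_one _
      calc cm m ^ (α j + (j : ℕ)) * Complex.abs (b m j j)
          ≤ cm m * Complex.abs (b m j j) :=
            mul_le_mul_of_nonneg_right h1 (Complex.abs.nonneg _)
        _ ≤ Bn := hmulB m hc1 j
        _ ≤ K * Bn ^ n := by
            have h2 : Bn ≤ Bn ^ n := by
              calc Bn = Bn ^ 1 := (pow_one Bn).symm
                _ ≤ Bn ^ n := pow_le_pow_right₀ hBn1 (by omega)
            have h3 : (0:ℝ) ≤ Bn ^ n := le_trans zero_le_one (one_le_pow₀ hBn1)
            nlinarith
    · by_cases hiS : i ∈ colS S j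
      · rw [hz m i j hiS (ne_of_lt hij)]
        simp only [map_zero, mul_zero]
        linarith
      · -- extraction of the entry via a minor
        have hjE : j ∈ colS S j := hjS j
        set E := colS S j with hEdef
        set kE := (E.erase j).card with hkEdef
        have hEcard : E.card = kE + 1 := by
          rw [hkEdef, Finset.card_erase_of_mem hjE]
          have h1 : 0 < E.card := Finset.card_pos.mpr ⟨j, hjE⟩
          omega
        have hiE' : i ∉ E.erase j := fun hmem => hiS (Finset.mem_of_mem_erase hmem)
        set R := insert i (E.erase j) with hRdef
        have hRcard : R.card = kE + 1 := by
          rw [hRdef, Finset.card_insert_of_notMem hiE']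
        have hEne : E.Nonempty := ⟨j, hjE⟩
        have hmaxE : E.orderEmbOfFin hEcard (Fin.last kE) = j := by
          have h1 := Finset.orderEmbOfFin_last hEcard (Nat.succ_pos kE)
          have h2 : E.max' (Finset.card_pos.mp (by rw [hEcard]; exact Nat.succ_pos kE)) = j :=
            le_antisymm (Finset.max'_le _ _ _ (fun x hx => hSle j x hx))
              (Finset.le_max' _ _ hjE)
          rw [h2] at h1
          exact h1
        obtain ⟨x₀, hx₀⟩ : ∃ x₀ : Fin (kE + 1), R.orderEmbOfFin hRcard x₀ = i := by
          have h1 : i ∈ Set.range (R.orderEmbOfFin hRcard) := by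
            rw [Finset.range_orderEmbOfFin]
            exact Finset.mem_coe.mpr (Finset.mem_insert_self _ _)
          exact h1
        set A : Matrix (Fin (kE + 1)) (Fin (kE + 1)) ℂ :=
          Matrix.of fun x y => b m (R.orderEmbOfFin hRcard x) (E.orderEmbOfFin hEcard y) with hA
        have hcol : ∀ x, x ≠ x₀ → A x (Fin.last kE) = 0 := by
          intro x hx
          have hxR := Finset.orderEmbOfFin_mem R hRcard x
          have hxne : R.orderEmbOfFin hRcard x ≠ i := by
            intro hcontra
            exact hx ((R.orderEmbOfFin hRcard).injective (hcontra.trans hx₀.symm))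
          have hxE : R.orderEmbOfFin hRcard x ∈ E.erase j := by
            rcases Finset.mem_insert.mp hxR with h | h
            · exact absurd h hxne
            · exact h
          show b m (R.orderEmbOfFin hRcard x) (E.orderEmbOfFin hEcard (Fin.last kE)) = 0
          rw [hmaxE]
          exact hz m _ j (by rw [← hEdef]; exact Finset.mem_of_mem_erase hxE)
            (Finset.ne_of_mem_erase hxE)
        have hAdet := Stmt15Aux.abs_det_col_single A x₀ hcol
        have hAx₀ : A x₀ (Fin.last kE) = b m i j := by
          show b m (R.orderEmbOfFin hRcard x₀) (E.orderEmbOfFin hEcard (Fin.last kE)) = b m i j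
          rw [hx₀, hmaxE]
        set f : Fin kE → Fin n := fun x => R.orderEmbOfFin hRcard (x₀.succAbove x) with hf
        have hfmono : StrictMono f :=
          fun x y hxy => (R.orderEmbOfFin hRcard).strictMono (Fin.strictMono_succAbove x₀ hxy)
        have hfmem : ∀ x, f x ∈ E.erase j := by
          intro x
          have h1 := Finset.orderEmbOfFin_mem R hRcard (x₀.succAbove x)
          have h2 : f x ≠ i := by
            intro hcontra
            exact Fin.succAbove_ne x₀ x
              ((R.orderEmbOfFin hRcard).injective (hcontra.trans hx₀.symm))
          rcases Finset.mem_insert.mp h1 with h | h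
          · exact absurd h h2
          · exact h
        have hgmem : ∀ y : Fin kE, E.orderEmbOfFin hEcard (Fin.castSucc y) ∈ E.erase j := by
          intro y
          refine Finset.mem_erase.mpr ⟨?_, Finset.orderEmbOfFin_mem _ _ _⟩
          intro hcontra
          have h1 := (E.orderEmbOfFin hEcard).injective (hcontra.trans hmaxE.symm)
          exact absurd h1 (Fin.ne_of_lt (Fin.castSucc_lt_last y))
        have hfu : f = ⇑((E.erase j).orderEmbOfFin hkEdef.symm) :=
          Finset.orderEmbOfFin_unique hkEdef.symm hfmem hfmono
        have hgu : (fun y : Fin kE => E.orderEmbOfFin hEcard (Fin.castSucc y)) =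
            ⇑((E.erase j).orderEmbOfFin hkEdef.symm) :=
          Finset.orderEmbOfFin_unique hkEdef.symm hgmem
            (fun x y hxy => (E.orderEmbOfFin hEcard).strictMono (Fin.strictMono_castSucc hxy))
        have hfg : ∀ y : Fin kE, E.orderEmbOfFin hEcard (Fin.castSucc y) = f y := by
          intro y
          have := congrFun hgu y
          rw [this, hfu]
        have hsub : (A.submatrix x₀.succAbove Fin.castSucc) =
            Matrix.of fun x y : Fin kE => b m (f x) (f y) := by
          ext x y
          show b m (R.orderEmbOfFin hRcard (x₀.succAbove x))
            (E.orderEmbOfFin hEcard (Fin.castSucc y)) = b m (f x) (f y)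
          rw [hfg y]
        have hsubdet : Complex.abs ((A.submatrix x₀.succAbove Fin.castSucc).det) =
            ∏ x, Complex.abs (b m (f x) (f x)) := by
          rw [hsub, Stmt15Aux.det_triangular_enum (b m) (hut m) f hfmono, map_prod]
        have hminA := hminor j (kE + 1) hEcard R hRcard m
        rw [← hA] at hminA
        rw [hAdet, hAx₀, hsubdet] at hminA
        -- lower bound for products of diagonal entries
        have hprodlow : cm m ^ kE ≤ Bn ^ kE * ∏ x, Complex.abs (b m (f x) (f x)) := by
          have hp1 : cm m ^ kE = ∏ _x : Fin kE, cm m := by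
            rw [Finset.prod_const, Finset.card_univ, Fintype.card_fin]
          have hp2 : (∏ _x : Fin kE, cm m) ≤ ∏ x : Fin kE, (Bn * Complex.abs (b m (f x) (f x))) :=
            Finset.prod_le_prod (fun x _ => (hcmpos m).le) (fun x _ => hlowB m (f x))
          have hp3 : (∏ x : Fin kE, (Bn * Complex.abs (b m (f x) (f x)))) =
              Bn ^ kE * ∏ x, Complex.abs (b m (f x) (f x)) := by
            rw [Finset.prod_mul_distrib, Finset.prod_const, Finset.card_univ, Fintype.card_fin]
          rw [hp1, ← hp3]
          exact hp2
        have hkEj : kE ≤ (j : ℕ) := by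
          have h1 : E.erase j ⊆ Finset.Iio j := by
            intro x hx
            exact Finset.mem_Iio.mpr
              (hSlt j x (by rw [← hEdef]; exact Finset.mem_of_mem_erase hx)
                (Finset.ne_of_mem_erase hx))
          have h2 := Finset.card_le_card h1
          rwa [Fin.card_Iio, ← hkEdef] at h2
        have e1 : cm m ^ (α j + (j : ℕ)) ≤ cm m ^ (α j + kE) :=
          pow_le_pow_of_le_one (hcmpos m).le hc1 (by omega)
        calc cm m ^ (α j + (j : ℕ)) * Complex.abs (b m i j)
            ≤ cm m ^ (α j + kE) * Complex.abs (b m i j) :=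
              mul_le_mul_of_nonneg_right e1 (Complex.abs.nonneg _)
          _ = cm m ^ α j * cm m ^ kE * Complex.abs (b m i j) := by rw [pow_add]
          _ ≤ cm m ^ α j * (Bn ^ kE * ∏ x, Complex.abs (b m (f x) (f x))) *
                Complex.abs (b m i j) :=
              mul_le_mul_of_nonneg_right
                (mul_le_mul_of_nonneg_left hprodlow (pow_nonneg (hcmpos m).le _))
                (Complex.abs.nonneg _)
          _ = Bn ^ kE * (cm m ^ α j *
                (Complex.abs (b m i j) * ∏ x, Complex.abs (b m (f x) (f x)))) := by ring
          _ ≤ Bn ^ kE * K :=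
              mul_le_mul_of_nonneg_left hminA (pow_nonneg (le_trans zero_le_one hBn1) _)
          _ ≤ K * Bn ^ n := by
              have h1 : Bn ^ kE ≤ Bn ^ n :=
                pow_le_pow_right₀ hBn1 (by have := j.isLt; omega)
              calc Bn ^ kE * K ≤ Bn ^ n * K :=
                  mul_le_mul_of_nonneg_right h1 (by linarith)
                _ = K * Bn ^ n := mul_comm _ _
    -- conclusion: show the coordinate sequence tends to 0
  have hqtD := (tendsto_pi_nhds.mp (hq t)) ⟨D, hD⟩
  refine (tendsto_nhds_unique hqtD ?_)
  by_cases hcase : ∃ i ∈ D, t < i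
  · -- an index strictly bigger than t : the minor vanishes identically
    obtain ⟨i, hiD, hti⟩ := hcase
    have hzero : ∀ m, colWedge (colS S t).card (b m) (colS S t) rfl ⟨D, hD⟩ = 0 := by
      intro m
      rw [hcoord m t ⟨D, hD⟩ (colS S t).card rfl]
      obtain ⟨x₀, hx₀⟩ : ∃ x₀, D.orderEmbOfFin (hD.trans rfl) x₀ = i := by
        have h1 : i ∈ Set.range (D.orderEmbOfFin (hD.trans rfl)) := by
          rw [Finset.range_orderEmbOfFin]
          exact Finset.mem_coe.mpr hiD
        exact h1
      apply Matrix.det_eq_zero_of_row_eq_zero x₀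
      intro y
      show b m (D.orderEmbOfFin (hD.trans rfl) x₀) ((colS S t).orderEmbOfFin rfl y) = 0
      rw [hx₀]
      exact hut m i _ (lt_of_le_of_lt (hSle t _ (Finset.orderEmbOfFin_mem _ _ _)) hti)
    have heq0 : (fun m => (C m ^ α t • colWedge (colS S t).card (b m) (colS S t) rfl) ⟨D, hD⟩)
        = fun _ => (0 : ℂ) := by
      funext m
      rw [Pi.smul_apply, hzero m, smul_zero]
    rw [heq0]
    exact tendsto_const_nhds
  · -- all indices are ≤ t, and t ∈ D
    have hDle : ∀ x ∈ D, x ≤ t := by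
      intro x hx
      by_contra hcon
      exact hcase ⟨x, hx, lt_of_not_ge hcon⟩
    have htD : t ∈ D := by
      obtain ⟨i0, hi0D, hti0⟩ := hDt
      have h1 : i0 = t := le_antisymm (hDle i0 hi0D) hti0
      rwa [h1] at hi0D
    have htE : t ∈ colS S t := hjS t
    set E := colS S t with hEdef
    set kE := (E.erase t).card with hkEdef
    have hEcard : E.card = kE + 1 := by
      rw [hkEdef, Finset.card_erase_of_mem htE]
      have h1 : 0 < E.card := Finset.card_pos.mpr ⟨t, htE⟩
      omega
    have hDcard : D.card = kE + 1 := hD.trans hEcard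
    have hmaxE : E.orderEmbOfFin hEcard (Fin.last kE) = t := by
      have h1 := Finset.orderEmbOfFin_last hEcard (Nat.succ_pos kE)
      have h2 : E.max' (Finset.card_pos.mp (by rw [hEcard]; exact Nat.succ_pos kE)) = t :=
        le_antisymm (Finset.max'_le _ _ _ (fun x hx => hSle t x hx))
          (Finset.le_max' _ _ htE)
      rw [h2] at h1
      exact h1
    have hmaxD : D.orderEmbOfFin (hD.trans hEcard) (Fin.last kE) = t := by
      have h1 := Finset.orderEmbOfFin_last (hD.trans hEcard) (Nat.succ_pos kE)
      have h2 : D.max' (Finset.card_pos.mp (by rw [hD.trans hEcard]; exact Nat.succ_pos kE)) = t :=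
        le_antisymm (Finset.max'_le _ _ _ (fun x hx => hDle x hx))
          (Finset.le_max' _ _ htD)
      rw [h2] at h1
      exact h1
    set e : Fin kE → Fin n := fun y => E.orderEmbOfFin hEcard (Fin.castSucc y) with hedef
    have helt : ∀ y, e y < t := by
      intro y
      have h1 : e y < E.orderEmbOfFin hEcard (Fin.last kE) :=
        (E.orderEmbOfFin hEcard).strictMono (Fin.castSucc_lt_last y)
      rwa [hmaxE] at h1
    have hkEt : kE ≤ (t : ℕ) := by
      have h1 : E.erase t ⊆ Finset.Iio t := by
        intro x hx
        exact Finset.mem_Iio.mpr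
          (hSlt t x (by rw [← hEdef]; exact Finset.mem_of_mem_erase hx)
            (Finset.ne_of_mem_erase hx))
      have h2 := Finset.card_le_card h1
      rwa [Fin.card_Iio, ← hkEdef] at h2
    set N : ℕ := ∑ y : Fin kE, (α (e y) + ((e y) : ℕ)) with hNdef
    set Q : ℝ := K * Bn ^ n with hQdef
    have hQ1 : (1 : ℝ) ≤ Q := by
      have h1 : (1 : ℝ) ≤ Bn ^ n := one_le_pow₀ hBn1
      nlinarith
    set Const : ℝ := Bn * (Nat.factorial n : ℝ) * Q ^ n with hConstdef
    have hConstB : B ≤ Const := by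
      have h1 : (1 : ℝ) ≤ (Nat.factorial n : ℝ) := by
        exact_mod_cast Nat.one_le_iff_ne_zero.mpr (Nat.factorial_ne_zero n)
      have h2 : (1 : ℝ) ≤ Q ^ n := one_le_pow₀ hQ1
      calc B ≤ Bn := hBle
        _ = Bn * 1 * 1 := by ring
        _ ≤ Bn * (Nat.factorial n : ℝ) * Q ^ n := by gcongr
    refine squeeze_zero_norm' ?_ (by simpa using hcm0.const_mul Const)
    have hev1 : ∀ᶠ m in atTop, cm m ≤ 1 := hcm0.eventually_le_const one_pos
    refine hev1.mono (fun m hc1 => ?_)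
    -- rewrite the coordinate
    rw [Pi.smul_apply, smul_eq_mul, hcoord m t ⟨D, hD⟩ (kE + 1) hEcard,
      Complex.norm_eq_abs, _root_.map_mul, map_pow]
    set A : Matrix (Fin (kE + 1)) (Fin (kE + 1)) ℂ :=
      Matrix.of fun x y => b m (D.orderEmbOfFin (hD.trans hEcard) x)
        (E.orderEmbOfFin hEcard y) with hA
    have hrow : ∀ y : Fin kE, A (Fin.last kE) (Fin.castSucc y) = 0 := by
      intro y
      show b m (D.orderEmbOfFin (hD.trans hEcard) (Fin.last kE))
        (E.orderEmbOfFin hEcard (Fin.castSucc y)) = 0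
      rw [hmaxD]
      exact hut m t (e y) (helt y)
    have hdetA : A.det = b m t t * (A.submatrix Fin.castSucc Fin.castSucc).det := by
      have h1 := Stmt15Aux.det_last_row A hrow
      have h2 : A (Fin.last kE) (Fin.last kE) = b m t t := by
        show b m (D.orderEmbOfFin (hD.trans hEcard) (Fin.last kE))
          (E.orderEmbOfFin hEcard (Fin.last kE)) = b m t t
        rw [hmaxD, hmaxE]
      rw [h2] at h1
      exact h1
    rw [show Complex.abs (C m) = cm m from rfl, hdetA, _root_.map_mul]
    rcases Nat.eq_zero_or_pos (t : ℕ) with ht0 | htpos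
    · -- t is the smallest index
      have hkE0 : kE = 0 := by omega
      have hsub1 : (A.submatrix Fin.castSucc Fin.castSucc).det = 1 := by
        have hie : IsEmpty (Fin kE) := by rw [hkE0]; exact Fin.isEmpty
        exact Matrix.det_isEmpty
      rw [hsub1, Complex.abs.map_one, mul_one]
      have hbP : Complex.abs (b m t t) = Complex.abs (P m t) := by rw [hP0 m t ht0]
      have h1 : cm m ^ α t ≤ cm m := by
        calc cm m ^ α t ≤ cm m ^ 1 :=
            pow_le_pow_of_le_one (hcmpos m).le hc1 (hαpos t)
          _ = cm m := pow_one _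
      calc cm m ^ α t * Complex.abs (b m t t)
          ≤ cm m * Complex.abs (b m t t) :=
            mul_le_mul_of_nonneg_right h1 (Complex.abs.nonneg _)
        _ = cm m * Complex.abs (P m t) := by rw [hbP]
        _ ≤ cm m * B := mul_le_mul_of_nonneg_left (hBP m t) (hcmpos m).le
        _ ≤ cm m * Const := mul_le_mul_of_nonneg_left hConstB (hcmpos m).le
        _ = Const * cm m := mul_comm _ _
    · -- t has a predecessor
      set t' : Fin n := ⟨(t : ℕ) - 1, lt_of_le_of_lt (Nat.sub_le _ _) t.isLt⟩ with ht'def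
      have htt' : (t' : ℕ) + 1 = (t : ℕ) := by
        have : (t' : ℕ) = (t : ℕ) - 1 := rfl
        omega
      have hNt : N + 2 ≤ α t := by
        have h1 : ∀ y : Fin kE, α (e y) + ((e y) : ℕ) ≤ α t' + (t' : ℕ) := by
          intro y
          have h2 : e y ≤ t' := by
            rw [Fin.le_def]
            have h3 := Fin.lt_def.mp (helt y)
            show ((e y) : ℕ) ≤ (t : ℕ) - 1
            omega
          exact Nat.add_le_add (hαmono _ _ h2) (Fin.le_def.mp h2)
        have h3 : N ≤ kE * (α t' + (t' : ℕ)) := by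
          rw [hNdef]
          calc (∑ y : Fin kE, (α (e y) + ((e y) : ℕ)))
              ≤ ∑ _y : Fin kE, (α t' + (t' : ℕ)) := Finset.sum_le_sum (fun y _ => h1 y)
            _ = kE * (α t' + (t' : ℕ)) := by
                rw [Finset.sum_const, Finset.card_univ, Fintype.card_fin, smul_eq_mul]
        have h4 := hα t t' htt'
        have h5 := hαlow t'
        have h6 : kE * (α t' + (t' : ℕ)) ≤ (t : ℕ) * (α t' + (t' : ℕ)) :=
          Nat.mul_le_mul_right _ hkEt
        have h7 : (t : ℕ) * (t' : ℕ) ≤ (t : ℕ) * α t' := Nat.mul_le_mul_left _ (by omega)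
        calc N + 2 ≤ (t : ℕ) * (α t' + (t' : ℕ)) + 2 := by omega
          _ = (t : ℕ) * α t' + (t : ℕ) * (t' : ℕ) + 2 := by ring_nf
          _ ≤ (t : ℕ) * α t' + (t : ℕ) * α t' + 2 := by omega
          _ = 2 * (t : ℕ) * α t' + 2 := by ring
          _ ≤ 2 * ((t : ℕ) + 1) * α t' + 2 := by
              have h8 : 2 * (t : ℕ) * α t' ≤ 2 * ((t : ℕ) + 1) * α t' :=
                Nat.mul_le_mul_right _ (by omega)
              omega
          _ ≤ α t := by omega
      -- weighted bound for the submatrix determinant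
      have hsubbound : cm m ^ N * Complex.abs ((A.submatrix Fin.castSucc Fin.castSucc).det) ≤
          (Nat.factorial kE : ℝ) * Q ^ kE := by
        rw [hNdef]
        refine Stmt15Aux.abs_det_le_mul _ (cm m) (hcmpos m)
          (fun y => α (e y) + ((e y) : ℕ)) Q ?_
        intro x y
        show cm m ^ (α (e y) + ((e y) : ℕ)) *
          Complex.abs (b m (D.orderEmbOfFin (hD.trans hEcard) (Fin.castSucc x)) (e y)) ≤ Q
        exact hentry m hc1 _ (e y)
      have hatt : cm m * Complex.abs (b m t t) ≤ Bn := hmulB m hc1 t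
      have e1 : cm m ^ α t ≤ cm m ^ (N + 2) :=
        pow_le_pow_of_le_one (hcmpos m).le hc1 hNt
      have e2 : cm m ^ (N + 2) = cm m ^ N * cm m * cm m := by ring
      have hkEn : kE ≤ n := by have := t.isLt; omega
      calc cm m ^ α t * (Complex.abs (b m t t) *
              Complex.abs ((A.submatrix Fin.castSucc Fin.castSucc).det))
          ≤ cm m ^ (N + 2) * (Complex.abs (b m t t) *
              Complex.abs ((A.submatrix Fin.castSucc Fin.castSucc).det)) :=
            mul_le_mul_of_nonneg_right e1 (by positivity)
        _ = (cm m * Complex.abs (b m t t)) *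
              (cm m ^ N * Complex.abs ((A.submatrix Fin.castSucc Fin.castSucc).det)) * cm m := by
            rw [e2]; ring
        _ ≤ Bn * ((Nat.factorial kE : ℝ) * Q ^ kE) * cm m := by
            refine mul_le_mul_of_nonneg_right ?_ (hcmpos m).le
            exact mul_le_mul hatt hsubbound (by positivity) (le_trans zero_le_one hBn1)
        _ ≤ Const * cm m := by
            refine mul_le_mul_of_nonneg_right ?_ (hcmpos m).le
            have hf : (Nat.factorial kE : ℝ) ≤ (Nat.factorial n : ℝ) := by
              exact_mod_cast Nat.factorial_le hkEn
            have hq2 : Q ^ kE ≤ Q ^ n := pow_le_pow_right₀ hQ1 hkEn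
            have h0f : (0 : ℝ) ≤ (Nat.factorial kE : ℝ) := by positivity
            have h0q : (0 : ℝ) ≤ Q ^ kE := by positivity
            calc Bn * ((Nat.factorial kE : ℝ) * Q ^ kE)
                ≤ Bn * ((Nat.factorial n : ℝ) * Q ^ n) := by
                  refine mul_le_mul_of_nonneg_left ?_ (le_trans zero_le_one hBn1)
                  exact mul_le_mul hf hq2 h0q (by positivity)
              _ = Const := by rw [hConstdef]; ring


end
end

section
/- Let S be a closed set of pairs and let (b^{(m)})_{m∈ℕ} be a sequence of upper triangular matrices in SL_n(ℂ) with b^{(m)}_{ij} = 0 for all pairs i ≠ j with i ∈ S_j. Suppose that for each i ∈ {1,…,n} the diagonal entries b^{(m)}_{ii} converge to a nonzero complex number as m → ∞, and that there exist indices s < t with s ∉ S_t such that |b^{(m)}_{st}| → ∞. Then the sequence m ↦ ⋀_{i∈S_t}(b^{(m)} e_i) does not converge in Λ^{|S_t|}ℂ^n. -/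
open Matrix Filter Topology

noncomputable section

lemma det_minor_abs {n k' : ℕ} (A : Matrix (Fin n) (Fin n) ℂ)
    (hA : ∀ i j : Fin n, j < i → A i j = 0)
    (c d : Fin (k' + 1) → Fin n) (hd : StrictMono d) (p : Fin (k' + 1))
    (hcol : ∀ a, a ≠ p → A (c a) (d (Fin.last k')) = 0)
    (heq : ∀ a : Fin k', c (p.succAbove a) = d (Fin.castSucc a)) :
    ‖Matrix.det (Matrix.of fun a b => A (c a) (d b))‖ =
      ‖A (c p) (d (Fin.last k'))‖ *
        ∏ a : Fin k', ‖A (d (Fin.castSucc a)) (d (Fin.castSucc a))‖ := by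
  have hdet : Matrix.det ((Matrix.of fun a b => A (c a) (d b)).submatrix
      p.succAbove (Fin.last k').succAbove) =
      ∏ a : Fin k', A (d a.castSucc) (d a.castSucc) := by
    have hT : ((Matrix.of fun a b => A (c a) (d b)).submatrix p.succAbove
        (Fin.last k').succAbove).BlockTriangular id := by
      intro i j hij
      simp only [Matrix.submatrix_apply, Matrix.of_apply, Fin.succAbove_last, heq]
      exact hA _ _ (hd (by exact_mod_cast Fin.castSucc_lt_castSucc_iff.mpr hij))
    rw [Matrix.det_of_upperTriangular hT]
    refine Finset.prod_congr rfl fun a _ => ?_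
    simp [Fin.succAbove_last, heq]
  rw [Matrix.det_succ_column _ (Fin.last k'), Finset.sum_eq_single p]
  · rw [hdet]
    simp only [Matrix.of_apply]
    rw [norm_mul, norm_mul, norm_pow, norm_neg, norm_one, one_pow, one_mul,
      norm_prod]
  · intro i _ hi
    simp [hcol i hi]
  · simp

/-- Let `S` be closed and `(b^{(m)})` a sequence of upper triangular
matrices in `SL_n(ℂ)` with `b^{(m)}_{ij} = 0` for all `i ∈ S_j` with `i ≠ j`. If each
diagonal entry converges to a nonzero complex number and there are `s < t` with
`s ∉ S_t` and `|b^{(m)}_{st}| → ∞`, then the sequence `m ↦ ⋀_{i∈S_t}(b^{(m)} e_i)`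
does not converge in `Λ^{|S_t|} ℂ^n`. -/
theorem stmt16 {n : ℕ} (hn : 1 ≤ n) (S : Finset (Fin n × Fin n)) (hS : PairsClosed S)
    (b : ℕ → Matrix (Fin n) (Fin n) ℂ)
    (hdet : ∀ m, (b m).det = 1)
    (hut : ∀ m (i j : Fin n), j < i → b m i j = 0)
    (hz : ∀ m (i j : Fin n), i ∈ colS S j → i ≠ j → b m i j = 0)
    (hdiag : ∀ i : Fin n, ∃ L : ℂ, L ≠ 0 ∧ Tendsto (fun m => b m i i) atTop (𝓝 L))
    (s t : Fin n) (hst : s < t) (hsS : s ∉ colS S t)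
    (hinf : Tendsto (fun m => ‖b m s t‖) atTop atTop) :
    ¬ ∃ L : ExtP n (colS S t).card,
        Tendsto (fun m => colWedge (colS S t).card (b m) (colS S t) rfl)
          atTop (𝓝 L) := by
  rintro ⟨L, hL⟩
  set D := colS S t with hD
  have htD : t ∈ D := Finset.mem_insert_self _ _
  have hDle : ∀ i ∈ D, i ≤ t := by
    intro i hi
    rcases Finset.mem_insert.mp hi with h | h
    · exact le_of_eq h
    · obtain ⟨q, hq, rfl⟩ := Finset.mem_image.mp h
      obtain ⟨hq1, hq2⟩ := Finset.mem_filter.mp hq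
      have h2 := hS.1 q hq1
      rw [hq2] at h2
      exact le_of_lt h2
  set E := D.erase t with hE
  set k' := E.card with hk'
  have hk : k' + 1 = D.card := Finset.card_erase_add_one htD
  have hsE : s ∉ E := fun h => hsS (Finset.mem_of_mem_erase h)
  set C : Finset (Fin n) := insert s E with hCdef
  have hC : C.card = D.card := by
    rw [Finset.card_insert_of_notMem hsE, hk]
  have hsC : s ∈ C := Finset.mem_insert_self _ _
  -- the relevant enumeration maps
  set e : Fin (k' + 1) ≃ Fin D.card := finCongr hk with he
  have hemono : StrictMono (e : Fin (k' + 1) → Fin D.card) := by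
    intro a b h
    rw [Fin.lt_def] at h ⊢
    simpa only [he, finCongr_apply_coe] using h
  set c : Fin (k' + 1) → Fin n := fun a => C.orderEmbOfFin hC (e a) with hc
  set d : Fin (k' + 1) → Fin n := fun a => D.orderEmbOfFin rfl (e a) with hd
  have hcmono : StrictMono c := fun a b h => (C.orderEmbOfFin hC).strictMono (hemono h)
  have hdmono : StrictMono d := fun a b h => (D.orderEmbOfFin rfl).strictMono (hemono h)
  have hcmem : ∀ a, c a ∈ C := fun a => Finset.orderEmbOfFin_mem _ _ _
  have hdmem : ∀ a, d a ∈ D := fun a => Finset.orderEmbOfFin_mem _ _ _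
  -- position of s
  obtain ⟨p, hp⟩ : ∃ p, c p = s := by
    have := Finset.range_orderEmbOfFin C hC
    have hs' : s ∈ Set.range (C.orderEmbOfFin hC) := by rw [this]; exact_mod_cast hsC
    obtain ⟨q, hq⟩ := hs'
    exact ⟨e.symm q, by simp [hc, hq]⟩
  -- the last column index is t
  have hlast : d (Fin.last k') = t := by
    obtain ⟨q, hq⟩ : ∃ q, d q = t := by
      have := Finset.range_orderEmbOfFin D (rfl : D.card = D.card)
      have ht' : t ∈ Set.range (D.orderEmbOfFin rfl) := by rw [this]; exact_mod_cast htD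
      obtain ⟨q, hq⟩ := ht'
      exact ⟨e.symm q, by simp [hd, hq]⟩
    refine le_antisymm (hDle _ (hdmem _)) ?_
    rw [← hq]
    exact hdmono.monotone (Fin.le_last _)
  -- column t vanishing off row p
  have hcol : ∀ m, ∀ a, a ≠ p → b m (c a) (d (Fin.last k')) = 0 := by
    intro m a ha
    have hca : c a ≠ s := fun h => ha (hcmono.injective (h.trans hp.symm))
    have hcaE : c a ∈ E := by
      rcases Finset.mem_insert.mp (hcmem a) with h | h
      · exact absurd h hca
      · exact h
    rw [hlast]
    exact hz m (c a) t (Finset.mem_of_mem_erase hcaE) (Finset.ne_of_mem_erase hcaE)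
  -- the two enumerations of E agree
  have heqE : ∀ a : Fin k', c (p.succAbove a) = d (Fin.castSucc a) := by
    have h1 : (fun a : Fin k' => c (p.succAbove a)) = E.orderEmbOfFin rfl := by
      refine Finset.orderEmbOfFin_unique rfl ?_ (hcmono.comp (Fin.strictMono_succAbove p))
      intro a
      have hne : c (p.succAbove a) ≠ s := fun h =>
        Fin.succAbove_ne p a (hcmono.injective (h.trans hp.symm))
      rcases Finset.mem_insert.mp (hcmem (p.succAbove a)) with h | h
      · exact absurd h hne
      · exact h
    have h2 : (fun a : Fin k' => d (Fin.castSucc a)) = E.orderEmbOfFin rfl := by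
      refine Finset.orderEmbOfFin_unique rfl ?_ (hdmono.comp Fin.strictMono_castSucc)
      intro a
      refine Finset.mem_erase.mpr ⟨?_, hdmem _⟩
      rw [← hlast]
      exact fun h => absurd (hdmono.injective h) (Fin.ne_last_of_lt (Fin.castSucc_lt_last a))
    intro a
    rw [congrFun h1 a, congrFun h2 a]
  -- the coordinate value
  have hval : ∀ m, colWedge D.card (b m) D rfl ⟨C, hC⟩ =
      Matrix.det (Matrix.of fun a b' : Fin (k' + 1) => b m (c a) (d b')) := by
    intro m
    have h1 : (Matrix.of fun a b' : Fin (k' + 1) => b m (c a) (d b')) =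
        (Matrix.of fun a b' : Fin D.card =>
          b m (C.orderEmbOfFin hC a) (D.orderEmbOfFin rfl b')).submatrix e e := rfl
    rw [h1, Matrix.det_submatrix_equiv_self]
    unfold colWedge wedgeFam
    congr 1
    ext a b'
    simp [stdVec, enumK, Matrix.mulVec_single, Finset.coe_orderIsoOfFin_apply]
  -- the absolute value formula
  have habs : ∀ m, ‖colWedge D.card (b m) D rfl ⟨C, hC⟩‖ =
      ‖b m s t‖ *
        ∏ a : Fin k', ‖b m (d a.castSucc) (d a.castSucc)‖ := by
    intro m
    rw [hval m, det_minor_abs (b m) (hut m) c d hdmono p (hcol m) heqE, hp, hlast]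
  -- limits
  choose La hLa0 hLa using fun a : Fin k' => hdiag (d a.castSucc)
  have hprod : Tendsto (fun m => ∏ a : Fin k',
      ‖b m (d a.castSucc) (d a.castSucc)‖) atTop
      (𝓝 (∏ a : Fin k', ‖La a‖)) := by
    refine tendsto_finset_prod _ fun a _ => ?_
    exact (continuous_norm.tendsto _).comp (hLa a)
  have hpos : 0 < ∏ a : Fin k', ‖La a‖ :=
    Finset.prod_pos fun a _ => norm_pos_iff.mpr (hLa0 a)
  have hatTop : Tendsto (fun m => ‖colWedge D.card (b m) D rfl ⟨C, hC⟩‖)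
      atTop atTop := by
    have := Filter.Tendsto.atTop_mul_pos hpos hinf hprod
    refine this.congr fun m => (habs m).symm
  exact not_tendsto_atTop_of_tendsto_nhds
    ((continuous_norm.tendsto _).comp (tendsto_pi_nhds.mp hL ⟨C, hC⟩)) hatTop


end
end
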